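/- arXiv:math/0702378 — 6 statements merged into one kernel-verified Lean document; each statement's English description precedes it below -/
import Mathlib

section
/- Let f : ℝ → ℝ be twice continuously differentiable with compact support. Let ν be differentiable on ℝ \ {0} with ν′(y) ≥ 0 for y ≠ 0, ν(x) → 0 as x → +∞ and as x → −∞, ∫_{-∞}^{∞} x²/(1+x²) ν′(x) dx < ∞, and for every M ∈ (0,∞) assume ∫_{-M}^{M} |ν(x)| dx < ∞ and ∫_{-M}^{M} |x| ν′(x) dx < ∞, and x·ν(x) → 0 as x → 0. Define k(x) = ∫_0^x ν(y) dy. Then for every x ∈ ℝ the function u ↦ ∫_{-∞}^{∞} f′(y) k(y−u) dy is differentiable at x, and its derivative equals ∫_{-∞}^{∞} [f(x+y) − f(x)] ν′(y) dy. -/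
open MeasureTheory Real Filter

section Aux

/-- Integration by parts kernel: if `g` has derivative `g'` off `0`, is continuous from both
sides at `0`, `g'` is integrable, and `g` tends to `0` at `±∞`, then `∫ g' = 0`. -/
private theorem aux_parts0 (g g' : ℝ → ℝ)
    (hderiv : ∀ z : ℝ, z ≠ 0 → HasDerivAt g (g' z) z)
    (hctIci : ContinuousWithinAt g (Set.Ici 0) 0)
    (hctIic : ContinuousWithinAt g (Set.Iic 0) 0)
    (hint : Integrable g' (volume : Measure ℝ))
    (htop : Tendsto g atTop (nhds 0)) (hbot : Tendsto g atBot (nhds 0)) :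
    ∫ z : ℝ, g' z = 0 := by
  have hIoi : ∫ z in Set.Ioi (0:ℝ), g' z = 0 - g 0 :=
    integral_Ioi_of_hasDerivAt_of_tendsto hctIci
      (fun z hz => hderiv z (ne_of_gt hz)) hint.integrableOn htop
  have hIic : ∫ z in Set.Iic (0:ℝ), g' z = g 0 - 0 :=
    integral_Iic_of_hasDerivAt_of_tendsto hctIic
      (fun z hz => hderiv z (ne_of_lt hz)) hint.integrableOn hbot
  rw [← intervalIntegral.integral_Iic_add_Ioi hint.integrableOn hint.integrableOn, hIoi, hIic]
  ring

/-- A bounded measurable function supported in `[-R, R]` times a locally integrable `ν`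
is integrable. -/
private theorem aux_INT (ν : ℝ → ℝ) (νm : AEStronglyMeasurable ν (volume : Measure ℝ))
    (hνloc : ∀ M : ℝ, 0 < M → IntegrableOn (fun x => |ν x|) (Set.Icc (-M) M))
    (g : ℝ → ℝ) (gm : AEStronglyMeasurable g (volume : Measure ℝ))
    (C R : ℝ) (hR : 0 < R) (hgb : ∀ z, |g z| ≤ C) (hgs : ∀ z, R < |z| → g z = 0) :
    Integrable (fun z => g z * ν z) := by
  have hbound : Integrable ((Set.Icc (-R) R).indicator (fun z => C * |ν z|)) :=
    IntegrableOn.integrable_indicator ((hνloc R hR).const_mul C) measurableSet_Icc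
  refine Integrable.mono' hbound (gm.mul νm) ?_
  filter_upwards with z
  by_cases hz : z ∈ Set.Icc (-R) R
  · rw [Set.indicator_of_mem hz]
    calc ‖g z * ν z‖ = |g z| * |ν z| := abs_mul _ _
    _ ≤ C * |ν z| := mul_le_mul_of_nonneg_right (hgb z) (abs_nonneg _)
  · rw [Set.indicator_of_notMem hz]
    have : R < |z| := by
      simp only [Set.mem_Icc, not_and_or, not_le] at hz
      rcases hz with h | h
      · rw [abs_of_nonpos (by linarith)]; linarith
      · rw [abs_of_pos (by linarith)]; linarith
    simp [hgs z this]

/-- Limit at `0` of `(f (x+z) - f x) * ν z` using `z * ν z → 0`. -/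
private theorem aux_TZ (f ν : ℝ → ℝ) (hf : ContDiff ℝ 2 f)
    (hx0 : Tendsto (fun z => z * ν z) (nhdsWithin 0 {(0:ℝ)}ᶜ) (nhds 0))
    (x : ℝ) (s : Set ℝ) (hs : s ⊆ {(0:ℝ)}ᶜ) :
    Tendsto (fun z => (f (x + z) - f x) * ν z) (nhdsWithin 0 s) (nhds 0) := by
  have hmono : nhdsWithin (0:ℝ) s ≤ nhdsWithin 0 {(0:ℝ)}ᶜ := nhdsWithin_mono 0 hs
  have T1 : Tendsto (fun z : ℝ => (f (x + z) - f x) / z) (nhdsWithin 0 {(0:ℝ)}ᶜ)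
      (nhds (deriv f x)) := by
    have hd : HasDerivAt f (deriv f x) x := ((hf.differentiable two_ne_zero) x).hasDerivAt
    have hslope := hasDerivAt_iff_tendsto_slope.1 hd
    have hcomp : Tendsto (fun z : ℝ => x + z) (nhdsWithin 0 {(0:ℝ)}ᶜ)
        (nhdsWithin x {x}ᶜ) := by
      apply tendsto_nhdsWithin_of_tendsto_nhds_of_eventually_within
      · have : Tendsto (fun z : ℝ => x + z) (nhds 0) (nhds (x + 0)) :=
          (continuous_const.add continuous_id).tendsto 0
        simpa using this.mono_left nhdsWithin_le_nhds
      · filter_upwards [self_mem_nhdsWithin] with z hz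
        simp only [Set.mem_compl_iff, Set.mem_singleton_iff] at hz ⊢
        intro h; exact hz (by linarith)
    have := hslope.comp hcomp
    refine this.congr fun z => ?_
    simp [slope_def_field, Function.comp]
  have T2 : Tendsto (fun z : ℝ => z * ν z) (nhdsWithin 0 s) (nhds 0) := hx0.mono_left hmono
  have Tprod := (T1.mono_left hmono).mul T2
  rw [mul_zero] at Tprod
  refine Tprod.congr' ?_
  filter_upwards [self_mem_nhdsWithin] with z hz
  have hz0 : z ≠ 0 := fun h => (hs hz) (by simp [h])
  field_simp

/-- Integrability of `(f (x+z) - f x) * ν' z`. -/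
private theorem aux_I4 (f ν' : ℝ → ℝ) (hf : ContDiff ℝ 2 f)
    (ν'm : AEStronglyMeasurable ν' (volume : Measure ℝ))
    (hν'pos : ∀ y : ℝ, y ≠ 0 → 0 ≤ ν' y)
    (hint : Integrable (fun z : ℝ => z ^ 2 / (1 + z ^ 2) * ν' z))
    (hν'loc : ∀ M : ℝ, 0 < M → IntegrableOn (fun z : ℝ => |z| * ν' z) (Set.Icc (-M) M))
    (C : ℝ) (hC0 : 0 ≤ C) (hCf : ∀ y : ℝ, |f y| ≤ C)
    (hLip : ∀ a b : ℝ, |f a - f b| ≤ C * |a - b|)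
    (x : ℝ) :
    Integrable (fun z : ℝ => (f (x + z) - f x) * ν' z) := by
  have hmeas : AEStronglyMeasurable (fun z : ℝ => (f (x + z) - f x) * ν' z)
      (volume : Measure ℝ) :=
    (((hf.continuous.comp (continuous_const.add continuous_id)).sub
      continuous_const).aestronglyMeasurable).mul ν'm
  have hae0 : ∀ᵐ z : ℝ, z ≠ (0:ℝ) := by
    filter_upwards [compl_mem_ae_iff.2 (by simp : (volume : Measure ℝ) {(0:ℝ)} = 0)] with z hz
    exact hz
  have h1 : IntegrableOn (fun z : ℝ => (f (x + z) - f x) * ν' z) (Set.Icc (-1) 1) := by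
    refine Integrable.mono' ((hν'loc 1 one_pos).const_mul C) hmeas.restrict ?_
    filter_upwards [ae_restrict_of_ae hae0] with z hz
    rw [Real.norm_eq_abs, abs_mul, abs_of_nonneg (hν'pos z hz)]
    have : |f (x + z) - f x| ≤ C * |z| := by
      have := hLip (x + z) x
      simpa using this
    calc |f (x + z) - f x| * ν' z ≤ (C * |z|) * ν' z :=
        mul_le_mul_of_nonneg_right this (hν'pos z hz)
    _ = C * (|z| * ν' z) := by ring
  have h2 : IntegrableOn (fun z : ℝ => (f (x + z) - f x) * ν' z) (Set.Icc (-1) 1)ᶜ := by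
    refine Integrable.mono' ((hint.const_mul (4 * C)).restrict) hmeas.restrict ?_
    filter_upwards [ae_restrict_of_ae hae0,
      ae_restrict_mem measurableSet_Icc.compl] with z hz hz1
    have hz1' : (1:ℝ) ≤ |z| := by
      simp only [Set.mem_compl_iff, Set.mem_Icc, not_and_or, not_le] at hz1
      rcases hz1 with h | h
      · rw [abs_of_nonpos (by linarith)]; linarith
      · rw [abs_of_pos (by linarith)]; linarith
    have hq : (1:ℝ) / 2 ≤ z ^ 2 / (1 + z ^ 2) := by
      rw [div_le_div_iff₀ (by norm_num) (by positivity)]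
      nlinarith [sq_abs z]
    rw [Real.norm_eq_abs, abs_mul, abs_of_nonneg (hν'pos z hz)]
    have hb : |f (x + z) - f x| ≤ 2 * C := by
      calc |f (x + z) - f x| ≤ |f (x + z)| + |f x| := abs_sub _ _
      _ ≤ C + C := add_le_add (hCf _) (hCf _)
      _ = 2 * C := by ring
    calc |f (x + z) - f x| * ν' z ≤ (2 * C) * ν' z :=
        mul_le_mul_of_nonneg_right hb (hν'pos z hz)
    _ ≤ (4 * C) * (z ^ 2 / (1 + z ^ 2) * ν' z) := by
        nlinarith [hν'pos z hz, mul_le_mul_of_nonneg_right hq (hν'pos z hz)]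
  have := h1.union h2
  rwa [Set.union_compl_self, integrableOn_univ] at this

end Aux

/-- Lemma 2.1 of the paper: convolution-type representation of the jump part
of a Lévy generator (case 0 < α < 1). -/
theorem stmt0
    (f ν ν' : ℝ → ℝ)
    (hf : ContDiff ℝ 2 f) (hfc : HasCompactSupport f)
    (hν : ∀ y : ℝ, y ≠ 0 → HasDerivAt ν (ν' y) y)
    (hν'pos : ∀ y : ℝ, y ≠ 0 → 0 ≤ ν' y)
    (hνtop : Tendsto ν atTop (nhds 0))
    (hνbot : Tendsto ν atBot (nhds 0))
    (hint : Integrable (fun x => x ^ 2 / (1 + x ^ 2) * ν' x))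
    (hνloc : ∀ M : ℝ, 0 < M → IntegrableOn (fun x => |ν x|) (Set.Icc (-M) M))
    (hν'loc : ∀ M : ℝ, 0 < M → IntegrableOn (fun x => |x| * ν' x) (Set.Icc (-M) M))
    (hx0 : Tendsto (fun x => x * ν x) (nhdsWithin 0 {(0:ℝ)}ᶜ) (nhds 0))
    (k : ℝ → ℝ) (hk : ∀ x : ℝ, k x = ∫ y in (0:ℝ)..x, ν y) :
    ∀ x : ℝ, HasDerivAt (fun u => ∫ y : ℝ, deriv f y * k (y - u))
      (∫ y : ℝ, (f (x + y) - f x) * ν' y) x := by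
  intro x
  -- measurability of ν
  have hres : (volume : Measure ℝ).restrict {(0:ℝ)}ᶜ = volume := by
    rw [Measure.restrict_congr_set (t := Set.univ), Measure.restrict_univ]
    rw [ae_eq_univ]; simp
  have νm : AEStronglyMeasurable ν (volume : Measure ℝ) := by
    have hcont : ContinuousOn ν {(0:ℝ)}ᶜ := fun y hy =>
      ((hν y hy).continuousAt).continuousWithinAt
    have := hcont.aemeasurable (μ := volume) (measurableSet_singleton (0:ℝ)).compl
    rw [hres] at this
    exact this.aestronglyMeasurable
  have ν'm : AEStronglyMeasurable ν' (volume : Measure ℝ) := by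
    have : ν' =ᵐ[volume] deriv ν := by
      filter_upwards [compl_mem_ae_iff.2 (by simp : (volume : Measure ℝ) {(0:ℝ)} = 0)] with y hy
      exact ((hν y hy).deriv).symm
    exact (measurable_deriv ν).aestronglyMeasurable.congr this.symm
  -- interval integrability of ν
  have hii : ∀ a b : ℝ, IntervalIntegrable ν volume a b := by
    intro a b
    set M := |a| + |b| + 1 with hM
    have hMpos : 0 < M := by positivity
    have h1 : IntegrableOn ν (Set.Icc (-M) M) := by
      refine Integrable.mono' (hνloc M hMpos) (νm.restrict) ?_
      filter_upwards with z
      simp [abs_abs]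
    refine (h1.mono_set ?_).intervalIntegrable
    intro z hz
    constructor
    · rcases Set.mem_uIcc.1 hz with ⟨h1', h2'⟩ | ⟨h1', h2'⟩ <;>
        nlinarith [abs_nonneg a, abs_nonneg b, neg_abs_le a, neg_abs_le b,
          le_abs_self a, le_abs_self b]
    · rcases Set.mem_uIcc.1 hz with ⟨h1', h2'⟩ | ⟨h1', h2'⟩ <;>
        nlinarith [abs_nonneg a, abs_nonneg b, neg_abs_le a, neg_abs_le b,
          le_abs_self a, le_abs_self b]
  -- properties of k
  have hkfun : k = fun x => ∫ y in (0:ℝ)..x, ν y := funext hk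
  have kcont : Continuous k := by
    rw [hkfun]; exact intervalIntegral.continuous_primitive hii 0
  have hk' : ∀ z : ℝ, z ≠ 0 → HasDerivAt k (ν z) z := by
    intro z hz
    rw [hkfun]
    exact intervalIntegral.integral_hasDerivAt_right (hii 0 z)
      (νm.stronglyMeasurableAtFilter) (hν z hz).continuousAt
  -- properties of f
  obtain ⟨L, hL, hLf⟩ : ∃ L : ℝ, 0 < L ∧ ∀ y : ℝ, L < |y| → f y = 0 ∧ deriv f y = 0 := by
    obtain ⟨L, hL⟩ := hfc.isCompact.isBounded.subset_closedBall 0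
    refine ⟨max L 1, lt_of_lt_of_le one_pos (le_max_right _ _), fun y hy => ?_⟩
    have hy' : y ∉ tsupport f := by
      intro hmem
      have := hL hmem
      simp only [Metric.mem_closedBall, Real.dist_eq, sub_zero] at this
      have : |y| ≤ max L 1 := le_trans this (le_max_left _ _)
      linarith
    exact ⟨image_eq_zero_of_notMem_tsupport hy',
      image_eq_zero_of_notMem_tsupport
        (fun h => hy' (closure_minimal support_deriv_subset isClosed_closure h))⟩
  obtain ⟨C, hC0, hCf, hCf', hLip⟩ : ∃ C : ℝ, 0 ≤ C ∧ (∀ y : ℝ, |f y| ≤ C) ∧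
      (∀ y : ℝ, |deriv f y| ≤ C) ∧ ∀ a b : ℝ, |f a - f b| ≤ C * |a - b| := by
    obtain ⟨C1, hC1⟩ := hfc.exists_bound_of_continuous hf.continuous
    obtain ⟨C2, hC2⟩ := hfc.deriv.exists_bound_of_continuous (hf.continuous_deriv one_le_two)
    set C := max (max C1 C2) 0 with hC
    have hC0 : 0 ≤ C := le_max_right _ _
    refine ⟨C, hC0, fun y => le_trans (hC1 y) (le_trans (le_max_left _ _) (le_max_left _ _)),
      fun y => le_trans (hC2 y) (le_trans (le_max_right _ _) (le_max_left _ _)), fun a b => ?_⟩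
    have := Convex.norm_image_sub_le_of_norm_deriv_le (f := f) (C := C)
      (fun x _ => (hf.differentiable two_ne_zero).differentiableAt)
      (fun x _ => le_trans (hC2 x) (le_trans (le_max_right _ _) (le_max_left _ _)))
      (convex_univ) (Set.mem_univ b) (Set.mem_univ a)
    simpa [Real.norm_eq_abs] using this
  -- Step 2: for every u, ∫ deriv f (z+u) k z = - ∫ f (z+u) ν z
  have step2 : ∀ u : ℝ, ∫ z : ℝ, deriv f (z + u) * k z = - ∫ z : ℝ, f (z + u) * ν z := by
    intro u
    set R : ℝ := L + |u| + 1 with hR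
    have hRpos : 0 < R := by positivity
    have hfu0 : ∀ z : ℝ, R ≤ |z| → f (z + u) = 0 := by
      intro z hz
      refine (hLf (z + u) ?_).1
      have := abs_sub_abs_le_abs_sub z (-u)
      simp only [sub_neg_eq_add, abs_neg] at this
      linarith
    have hdf : ∀ z : ℝ, HasDerivAt (fun z => f (z + u)) (deriv f (z + u)) z := by
      intro z
      have h1 : HasDerivAt f (deriv f (z + u)) (z + u) :=
        ((hf.differentiable two_ne_zero) (z + u)).hasDerivAt
      simpa [Function.comp_def] using h1.comp z ((hasDerivAt_id z).add_const u)
    have I1 : Integrable (fun z : ℝ => deriv f (z + u) * k z) := by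
      have hsupp : HasCompactSupport fun z : ℝ => deriv f (z + u) :=
        (hfc.deriv).comp_homeomorph (Homeomorph.addRight u)
      exact Continuous.integrable_of_hasCompactSupport
        (((hf.continuous_deriv one_le_two).comp (continuous_id.add continuous_const)).mul kcont)
        (hsupp.mul_right)
    have I2 : Integrable (fun z : ℝ => f (z + u) * ν z) := by
      refine aux_INT ν νm hνloc (fun z => f (z + u)) ?_ C R hRpos (fun z => hCf _)
        (fun z hz => hfu0 z hz.le)
      exact (hf.continuous.comp (continuous_id.add continuous_const)).aestronglyMeasurable
    have gcont : Continuous fun z : ℝ => f (z + u) * k z :=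
      (hf.continuous.comp (continuous_id.add continuous_const)).mul kcont
    have htop : Tendsto (fun z : ℝ => f (z + u) * k z) atTop (nhds 0) := by
      refine Tendsto.congr' ?_ tendsto_const_nhds
      filter_upwards [eventually_ge_atTop R] with z hz
      rw [hfu0 z (le_trans hz (le_abs_self z)), zero_mul]
    have hbot : Tendsto (fun z : ℝ => f (z + u) * k z) atBot (nhds 0) := by
      refine Tendsto.congr' ?_ tendsto_const_nhds
      filter_upwards [eventually_le_atBot (-R)] with z hz
      rw [hfu0 z (by rw [abs_of_nonpos (by linarith)]; linarith), zero_mul]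
    have h0 : ∫ z : ℝ, (deriv f (z + u) * k z + f (z + u) * ν z) = 0 :=
      aux_parts0 _ _ (fun z hz => (hdf z).mul (hk' z hz))
        gcont.continuousWithinAt gcont.continuousWithinAt (I1.add I2) htop hbot
    rw [integral_add I1 I2] at h0
    linarith
  -- Step 1: substitution
  have step1 : ∀ u : ℝ, (∫ y : ℝ, deriv f y * k (y - u)) = ∫ z : ℝ, deriv f (z + u) * k z := by
    intro u
    rw [← integral_add_right_eq_self (fun y : ℝ => deriv f y * k (y - u)) u]
    simp
  -- Step 3: derivative of u ↦ ∫ f (z+u) ν z via dominated convergence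
  have step3 : HasDerivAt (fun u => ∫ z : ℝ, f (z + u) * ν z)
      (∫ z : ℝ, deriv f (z + x) * ν z) x := by
    set R : ℝ := L + |x| + 2 with hR
    have hRpos : 0 < R := by positivity
    set bound : ℝ → ℝ := (Set.Icc (-R) R).indicator (fun z => C * |ν z|) with hbdef
    have bound_int : Integrable bound :=
      IntegrableOn.integrable_indicator ((hνloc R hRpos).const_mul C) measurableSet_Icc
    have key := hasDerivAt_integral_of_dominated_loc_of_deriv_le (μ := volume)
      (F := fun u z => f (z + u) * ν z) (F' := fun u z => deriv f (z + u) * ν z)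
      (x₀ := x) (s := Metric.ball x 1) (bound := bound) (Metric.ball_mem_nhds x one_pos)
      ?_ ?_ ?_ ?_ bound_int ?_
    · exact key.2
    · filter_upwards with u
      exact ((hf.continuous.comp
        (continuous_id.add continuous_const)).aestronglyMeasurable).mul νm
    · exact aux_INT ν νm hνloc (fun z => f (z + x)) ((hf.continuous.comp
        (continuous_id.add continuous_const)).aestronglyMeasurable) C (L + |x| + 1)
        (by positivity) (fun z => hCf _) (fun z hz => by
          refine (hLf (z + x) ?_).1
          have := abs_sub_abs_le_abs_sub z (-x)
          simp only [sub_neg_eq_add, abs_neg] at this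
          linarith)
    · exact (((hf.continuous_deriv one_le_two).comp
        (continuous_id.add continuous_const)).aestronglyMeasurable).mul νm
    · filter_upwards with z
      intro u hu
      rw [Metric.mem_ball, Real.dist_eq] at hu
      by_cases hz : z ∈ Set.Icc (-R) R
      · rw [hbdef, Set.indicator_of_mem hz]
        calc ‖deriv f (z + u) * ν z‖ = |deriv f (z + u)| * |ν z| := abs_mul _ _
        _ ≤ C * |ν z| := mul_le_mul_of_nonneg_right (hCf' _) (abs_nonneg _)
      · rw [hbdef, Set.indicator_of_notMem hz]
        have hzR : R < |z| := by
          simp only [Set.mem_Icc, not_and_or, not_le] at hz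
          rcases hz with h | h
          · rw [abs_of_nonpos (by linarith)]; linarith
          · rw [abs_of_pos (by linarith)]; linarith
        have : deriv f (z + u) = 0 := by
          refine (hLf (z + u) ?_).2
          have h1 := abs_sub_abs_le_abs_sub z (-u)
          simp only [sub_neg_eq_add, abs_neg] at h1
          have h2 : |u| ≤ |x| + 1 := by
            have h3 := abs_sub_abs_le_abs_sub u x
            have h4 : |x - u| = |u - x| := abs_sub_comm x u
            linarith
          linarith
        simp [this]
    · filter_upwards with z
      intro u hu
      have h1 : HasDerivAt (fun u => f (z + u)) (deriv f (z + u)) u := by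
        have h2 : HasDerivAt f (deriv f (z + u)) (z + u) :=
          ((hf.differentiable two_ne_zero) (z + u)).hasDerivAt
        simpa [Function.comp_def] using h2.comp u ((hasDerivAt_id u).const_add z)
      exact h1.mul_const (ν z)
  -- Step 4: ∫ deriv f (x+z) ν z = - ∫ (f (x+z) - f x) ν' z
  have step4 : ∫ z : ℝ, deriv f (x + z) * ν z = - ∫ z : ℝ, (f (x + z) - f x) * ν' z := by
    set R : ℝ := L + |x| + 1 with hR
    have hRpos : 0 < R := by positivity
    have hfx0 : ∀ z : ℝ, R ≤ |z| → f (x + z) = 0 := by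
      intro z hz
      refine (hLf (x + z) ?_).1
      have := abs_sub_abs_le_abs_sub z (-x)
      simp only [sub_neg_eq_add, abs_neg] at this
      rw [add_comm]
      linarith
    have hdfx : ∀ z : ℝ, HasDerivAt (fun z => f (x + z)) (deriv f (x + z)) z := by
      intro z
      have h1 : HasDerivAt f (deriv f (x + z)) (x + z) :=
        ((hf.differentiable two_ne_zero) (x + z)).hasDerivAt
      simpa [Function.comp_def] using h1.comp z ((hasDerivAt_id z).const_add x)
    set g : ℝ → ℝ := fun z => if z = 0 then 0 else (f (x + z) - f x) * ν z with hg
    have hg_eq : ∀ z : ℝ, z ≠ 0 → g z = (f (x + z) - f x) * ν z := by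
      intro z hz; simp [hg, hz]
    have hgderiv : ∀ z : ℝ, z ≠ 0 →
        HasDerivAt g (deriv f (x + z) * ν z + (f (x + z) - f x) * ν' z) z := by
      intro z hz
      have hh : HasDerivAt (fun z => (f (x + z) - f x) * ν z)
          (deriv f (x + z) * ν z + (f (x + z) - f x) * ν' z) z :=
        ((hdfx z).sub_const (f x)).mul (hν z hz)
      refine hh.congr_of_eventuallyEq ?_
      filter_upwards [isOpen_compl_singleton.mem_nhds hz] with w hw
      exact hg_eq w hw
    have hctIci : ContinuousWithinAt g (Set.Ici 0) 0 := by
      have h0 : g 0 = 0 := by simp [hg]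
      rw [ContinuousWithinAt, h0, ← Set.Ioi_insert, nhdsWithin_insert]
      rw [tendsto_sup]
      constructor
      · simpa [h0] using tendsto_pure_nhds g 0
      · refine Tendsto.congr' ?_
          (aux_TZ f ν hf hx0 x (Set.Ioi 0) (fun z hz => ne_of_gt hz))
        filter_upwards [self_mem_nhdsWithin] with z hz
        exact (hg_eq z (ne_of_gt hz)).symm
    have hctIic : ContinuousWithinAt g (Set.Iic 0) 0 := by
      have h0 : g 0 = 0 := by simp [hg]
      rw [ContinuousWithinAt, h0, ← Set.Iio_insert, nhdsWithin_insert]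
      rw [tendsto_sup]
      constructor
      · simpa [h0] using tendsto_pure_nhds g 0
      · refine Tendsto.congr' ?_
          (aux_TZ f ν hf hx0 x (Set.Iio 0) (fun z hz => ne_of_lt hz))
        filter_upwards [self_mem_nhdsWithin] with z hz
        exact (hg_eq z (ne_of_lt hz)).symm
    have I3 : Integrable (fun z : ℝ => deriv f (x + z) * ν z) := by
      refine aux_INT ν νm hνloc (fun z => deriv f (x + z)) ((hf.continuous_deriv one_le_two).comp
        (continuous_const.add continuous_id)).aestronglyMeasurable C R hRpos
        (fun z => hCf' _) (fun z hz => ?_)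
      refine (hLf (x + z) ?_).2
      have := abs_sub_abs_le_abs_sub z (-x)
      simp only [sub_neg_eq_add, abs_neg] at this
      rw [add_comm]
      linarith
    have I4 : Integrable (fun z : ℝ => (f (x + z) - f x) * ν' z) :=
      aux_I4 f ν' hf ν'm hν'pos hint hν'loc C hC0 hCf hLip x
    have htop : Tendsto g atTop (nhds 0) := by
      have h5 : Tendsto (fun z : ℝ => -f x * ν z) atTop (nhds 0) := by
        simpa using hνtop.const_mul (-f x)
      refine Tendsto.congr' ?_ h5
      filter_upwards [eventually_ge_atTop R] with z hz
      rw [hg_eq z (by intro h; rw [h] at hz; linarith),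
        hfx0 z (le_trans hz (le_abs_self z))]
      ring
    have hbot : Tendsto g atBot (nhds 0) := by
      have h5 : Tendsto (fun z : ℝ => -f x * ν z) atBot (nhds 0) := by
        simpa using hνbot.const_mul (-f x)
      refine Tendsto.congr' ?_ h5
      filter_upwards [eventually_le_atBot (-R)] with z hz
      rw [hg_eq z (by intro h; rw [h] at hz; linarith),
        hfx0 z (by rw [abs_of_nonpos (by linarith)]; linarith)]
      ring
    have h0 : ∫ z : ℝ, (deriv f (x + z) * ν z + (f (x + z) - f x) * ν' z) = 0 :=
      aux_parts0 _ _ hgderiv hctIci hctIic (I3.add I4) htop hbot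
    rw [integral_add I3 I4] at h0
    linarith
  -- assemble
  have hcomm : (∫ z : ℝ, deriv f (z + x) * ν z) = ∫ z : ℝ, deriv f (x + z) * ν z := by
    congr 1
    funext z
    rw [add_comm]
  have hval : (∫ y : ℝ, (f (x + y) - f x) * ν' y) = - ∫ z : ℝ, deriv f (z + x) * ν z := by
    rw [hcomm, step4]
    ring
  have hfinal : HasDerivAt (fun u => - ∫ z : ℝ, f (z + u) * ν z)
      (- ∫ z : ℝ, deriv f (z + x) * ν z) x := step3.neg
  have heq : (fun u => ∫ y : ℝ, deriv f y * k (y - u)) =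
      (fun u => - ∫ z : ℝ, f (z + u) * ν z) := by
    funext u
    rw [step1 u, step2 u]
  rw [heq, hval]
  exact hfinal
end

section
/- Let p : ℝ \ {0} → [0,∞) be measurable with ∫_{-∞}^{∞} y²/(1+y²) p(y) dy < ∞, ∫_x^{∞} y p(y) dy < ∞ for every x > 0, and ∫_{-∞}^{-x} |y| p(y) dy < ∞ for every x > 0. Define k(x) = ∫_x^{∞} (y−x) p(y) dy for x > 0 and k(x) = ∫_{-∞}^{x} (x−y) p(y) dy for x < 0, and assume k ∈ L¹(ℝ). Then for every real x ≠ 0: ∫_{-∞}^{∞} k(t) cos(xt) dt = ∫_{-∞}^{∞} p(t) (1 − cos(xt)) / x² dt, both integrals being finite; moreover, if p > 0 on a set of positive Lebesgue measure, then ∫_{-∞}^{∞} k(t) cos(xt) dt > 0. -/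
open MeasureTheory Real

private lemma aux_ftc (c : ℝ) (hc : c ≠ 0) (y : ℝ) :
    ∫ t in (0:ℝ)..y, (y - t) * Real.cos (c * t) = (1 - Real.cos (c * y)) / c ^ 2 := by
  have h : ∀ t ∈ Set.uIcc (0:ℝ) y, HasDerivAt
      (fun t => (y - t) * (Real.sin (c*t) / c) - Real.cos (c*t) / c^2)
      ((y - t) * Real.cos (c*t)) t := by
    intro t _
    have h1 : HasDerivAt (fun t : ℝ => c * t) c t := by
      simpa using (hasDerivAt_id t).const_mul c
    have hsin : HasDerivAt (fun t => Real.sin (c*t)) (Real.cos (c*t) * c) t :=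
      (Real.hasDerivAt_sin (c*t)).comp t h1
    have hcos : HasDerivAt (fun t => Real.cos (c*t)) (-Real.sin (c*t) * c) t :=
      (Real.hasDerivAt_cos (c*t)).comp t h1
    have h2 : HasDerivAt (fun t : ℝ => y - t) (-1) t := by
      simpa using (hasDerivAt_id' t).const_sub y
    have : HasDerivAt (fun t => (y - t) * (Real.sin (c*t) / c) - Real.cos (c*t) / c^2)
        (-1 * (Real.sin (c*t) / c) + (y - t) * (Real.cos (c*t) * c / c)
          - -Real.sin (c*t) * c / c^2) t :=
      (h2.mul (hsin.div_const c)).sub (hcos.div_const (c^2))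
    convert this using 1
    field_simp
    ring
  have hi : IntervalIntegrable (fun t => (y - t) * Real.cos (c*t)) volume 0 y :=
    Continuous.intervalIntegrable (by continuity) 0 y
  rw [intervalIntegral.integral_eq_sub_of_hasDerivAt h hi]
  simp [Real.sin_zero, Real.cos_zero]
  field_simp
  ring

private lemma aux_intOn (p : ℝ → ℝ) (hmeas : Measurable p)
    (hpos : ∀ y : ℝ, 0 < y → 0 ≤ p y)
    (hintp : ∀ x : ℝ, 0 < x → IntegrableOn (fun y => y * p y) (Set.Ioi x))
    (t : ℝ) (ht : 0 < t) : IntegrableOn (fun y => (y - t) * p y) (Set.Ioi t) := by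
  have h1 : IntegrableOn (fun y => y * p y) (Set.Ioi t) := hintp t ht
  have h2 : IntegrableOn (fun y => t * p y) (Set.Ioi t) := by
    have hp : IntegrableOn p (Set.Ioi t) := by
      refine Integrable.mono' (h1.const_mul t⁻¹) (hmeas.aestronglyMeasurable.restrict) ?_
      filter_upwards [ae_restrict_mem measurableSet_Ioi] with y hy
      have hy' : t < y := hy
      have hpy := hpos y (ht.trans hy')
      rw [Real.norm_eq_abs, abs_of_nonneg hpy]
      rw [inv_mul_eq_div, le_div_iff₀ ht]
      nlinarith
    exact hp.const_mul t
  have : (fun y => (y - t) * p y) = fun y => y * p y - t * p y := by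
    funext y; ring
  rw [this]
  exact h1.sub h2

private lemma aux_side (p k : ℝ → ℝ) (c : ℝ) (hc : c ≠ 0) (hmeas : Measurable p)
    (hpos : ∀ y : ℝ, 0 < y → 0 ≤ p y)
    (hintp : ∀ x : ℝ, 0 < x → IntegrableOn (fun y => y * p y) (Set.Ioi x))
    (hk : ∀ t : ℝ, 0 < t → k t = ∫ y in Set.Ioi t, (y - t) * p y)
    (hk1 : IntegrableOn k (Set.Ioi 0)) :
    ∫ t in Set.Ioi 0, k t * Real.cos (c * t)
      = ∫ y in Set.Ioi 0, p y * ((1 - Real.cos (c * y)) / c ^ 2) := by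
  set μ := volume.restrict (Set.Ioi (0:ℝ)) with hμ
  set F : ℝ → ℝ → ℝ := fun t y =>
    Set.indicator (Set.Ioi t) (fun z => (z - t) * p z * Real.cos (c * t)) y with hF
  have hFmeas : Measurable (Function.uncurry F) := by
    have he : Function.uncurry F = fun q : ℝ × ℝ =>
        Set.indicator {q : ℝ × ℝ | q.1 < q.2}
          (fun q => (q.2 - q.1) * p q.2 * Real.cos (c * q.1)) q := by
      funext q
      simp only [Function.uncurry, hF, Set.indicator, Set.mem_Ioi, Set.mem_setOf_eq]
    rw [he]
    exact Measurable.indicator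
      (((measurable_snd.sub measurable_fst).mul (hmeas.comp measurable_snd)).mul
        (Real.continuous_cos.measurable.comp (measurable_const.mul measurable_fst)))
      (measurableSet_lt measurable_fst measurable_snd)
  have knn : ∀ t : ℝ, 0 < t → 0 ≤ k t := by
    intro t ht
    rw [hk t ht]
    refine setIntegral_nonneg measurableSet_Ioi fun y hy => ?_
    exact mul_nonneg (sub_nonneg.2 (le_of_lt hy)) (hpos y (ht.trans hy))
  have hrr : ∀ t : ℝ, 0 < t → μ.restrict (Set.Ioi t) = volume.restrict (Set.Ioi t) := by
    intro t ht
    rw [hμ, Measure.restrict_restrict measurableSet_Ioi,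
      Set.inter_eq_left.2 (Set.Ioi_subset_Ioi ht.le)]
  have inner : ∀ t : ℝ, 0 < t → ∫ y, F t y ∂μ = k t * Real.cos (c * t) := by
    intro t ht
    rw [hF]
    rw [integral_indicator measurableSet_Ioi, hrr t ht]
    rw [show (fun z => (z - t) * p z * Real.cos (c * t))
        = fun z => ((z - t) * p z) * Real.cos (c * t) from rfl,
      integral_mul_const, ← hk t ht]
  have normint : ∀ t : ℝ, 0 < t → ∫ y, ‖F t y‖ ∂μ = k t * |Real.cos (c * t)| := by
    intro t ht
    have h1 : (fun y => ‖F t y‖) = Set.indicator (Set.Ioi t)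
        (fun z => ‖(z - t) * p z * Real.cos (c * t)‖) := by
      funext y
      rw [hF]
      exact norm_indicator_eq_indicator_norm _ y
    rw [h1, integral_indicator measurableSet_Ioi, hrr t ht]
    have h2 : ∫ z in Set.Ioi t, ‖(z - t) * p z * Real.cos (c * t)‖
        = ∫ z in Set.Ioi t, ((z - t) * p z) * |Real.cos (c * t)| := by
      refine setIntegral_congr_fun measurableSet_Ioi fun z hz => ?_
      rw [Real.norm_eq_abs, abs_mul, abs_mul,
        abs_of_nonneg (sub_nonneg.2 (le_of_lt hz)), abs_of_nonneg (hpos z (ht.trans hz))]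
    rw [h2, integral_mul_const, ← hk t ht]
  have hprod : Integrable (Function.uncurry F) (μ.prod μ) := by
    rw [integrable_prod_iff hFmeas.aestronglyMeasurable]
    constructor
    · filter_upwards [ae_restrict_mem measurableSet_Ioi] with t ht
      simp only [Function.uncurry_apply_pair, hF]
      rw [integrable_indicator_iff measurableSet_Ioi]
      have : IntegrableOn (fun z => (z - t) * p z * Real.cos (c * t)) (Set.Ioi t) volume :=
        (aux_intOn p hmeas hpos hintp t ht).mul_const _
      rwa [IntegrableOn, hrr t ht]
    · refine Integrable.mono' hk1.norm ?_ ?_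
      · exact (hFmeas.norm.stronglyMeasurable.integral_prod_right').aestronglyMeasurable
      · filter_upwards [ae_restrict_mem measurableSet_Ioi] with t ht
        have h0 : 0 ≤ ∫ y, ‖F t y‖ ∂μ := integral_nonneg fun y => norm_nonneg _
        simp only [Function.uncurry_apply_pair]
        rw [Real.norm_eq_abs, abs_of_nonneg h0, normint t ht, Real.norm_eq_abs]
        calc k t * |Real.cos (c * t)| ≤ k t * 1 :=
              mul_le_mul_of_nonneg_left (abs_cos_le_one _) (knn t ht)
          _ = k t := mul_one _
          _ ≤ |k t| := le_abs_self _
  have hswap := integral_integral_swap hprod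
  have hL : ∫ t in Set.Ioi 0, k t * Real.cos (c * t) = ∫ t, (∫ y, F t y ∂μ) ∂μ :=
    setIntegral_congr_fun measurableSet_Ioi fun t ht => (inner t ht).symm
  have hR : ∫ y, (∫ t, F t y ∂μ) ∂μ
      = ∫ y in Set.Ioi 0, p y * ((1 - Real.cos (c * y)) / c ^ 2) := by
    refine setIntegral_congr_fun measurableSet_Ioi fun y hy => ?_
    have hy' : (0:ℝ) < y := hy
    have h1 : (fun t => F t y)
        = Set.indicator (Set.Iio y) (fun t => (y - t) * p y * Real.cos (c * t)) := by
      funext t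
      simp only [hF, Set.indicator, Set.mem_Ioi, Set.mem_Iio]
    rw [h1, integral_indicator measurableSet_Iio, hμ,
      Measure.restrict_restrict measurableSet_Iio, Set.Iio_inter_Ioi,
      ← integral_Ioc_eq_integral_Ioo, ← intervalIntegral.integral_of_le hy'.le]
    have h2 : ∀ t : ℝ, (y - t) * p y * Real.cos (c * t) = p y * ((y - t) * Real.cos (c * t)) :=
      fun t => by ring
    simp_rw [h2]
    rw [intervalIntegral.integral_const_mul, aux_ftc c hc y]
  rw [hL, hswap, hR]

private lemma aux_neg_int {f : ℝ → ℝ} {s : Set ℝ} (hf : IntegrableOn f s) :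
    IntegrableOn (fun x => f (-x)) ((fun x : ℝ => -x) ⁻¹' s) := by
  have m : MeasurableEmbedding fun x : ℝ => -x := (Homeomorph.neg ℝ).measurableEmbedding
  rw [← Measure.map_neg_eq_self (volume : Measure ℝ)] at hf
  exact m.integrableOn_map_iff.mp hf

/-- Proposition 7.4 and relation (7.12) of the paper: the cosine transform of the
kernel `k` built from the Lévy density `p` equals `∫ p(t)(1 − cos xt)/x² dt`, and is
positive if `p > 0` on a set of positive measure. -/
theorem stmt7 (p k : ℝ → ℝ) (hmeas : Measurable p)
    (hpos : ∀ y : ℝ, y ≠ 0 → 0 ≤ p y)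
    (hint : Integrable (fun y => y ^ 2 / (1 + y ^ 2) * p y))
    (hintp : ∀ x : ℝ, 0 < x → IntegrableOn (fun y => y * p y) (Set.Ioi x))
    (hintm : ∀ x : ℝ, 0 < x → IntegrableOn (fun y => |y| * p y) (Set.Iio (-x)))
    (hkp : ∀ x : ℝ, 0 < x → k x = ∫ y in Set.Ioi x, (y - x) * p y)
    (hkm : ∀ x : ℝ, x < 0 → k x = ∫ y in Set.Iio x, (x - y) * p y)
    (hk1 : Integrable k) :
    ∀ x : ℝ, x ≠ 0 →
      (Integrable (fun s => k s * Real.cos (x * s)) ∧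
       Integrable (fun s => p s * (1 - Real.cos (x * s)) / x ^ 2) ∧
       (∫ s : ℝ, k s * Real.cos (x * s))
         = ∫ s : ℝ, p s * (1 - Real.cos (x * s)) / x ^ 2) ∧
      (0 < volume {y : ℝ | 0 < p y} →
        0 < ∫ s : ℝ, k s * Real.cos (x * s)) := by
  intro x hx
  have hx2 : (0:ℝ) < x ^ 2 := by positivity
  -- global integrability of k·cos
  have hI1 : Integrable (fun s => k s * Real.cos (x * s)) := by
    have := hk1.bdd_mul
      ((Real.continuous_cos.comp (continuous_const.mul continuous_id)).aestronglyMeasurable)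
      (c := 1) (Filter.Eventually.of_forall fun s => by simpa using abs_cos_le_one (x * s))
    simpa [mul_comm] using this
  -- global integrability of the p-side integrand
  have hI2 : Integrable (fun s => p s * (1 - Real.cos (x * s)) / x ^ 2) := by
    refine Integrable.mono' (hint.const_mul (2 * (1 + x ^ 2) / x ^ 2)) ?_ ?_
    · exact ((hmeas.mul ((measurable_const.sub
        (Real.continuous_cos.measurable.comp (measurable_const.mul measurable_id))))).div_const
        _).aestronglyMeasurable
    · refine Filter.Eventually.of_forall fun s => ?_
      by_cases hs : s = 0
      · subst hs; simp
      · have hps := hpos s hs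
        have hcs : 0 ≤ 1 - Real.cos (x * s) := by
          have := Real.cos_le_one (x * s); linarith
        have hs2 : (0:ℝ) < 1 + s ^ 2 := by positivity
        rw [Real.norm_eq_abs, abs_div, abs_mul, abs_of_nonneg hps, abs_of_nonneg hcs,
          abs_of_pos hx2]
        have key : (1 - Real.cos (x * s)) * (1 + s ^ 2) ≤ 2 * (1 + x ^ 2) * s ^ 2 := by
          rcases le_or_gt 1 (x ^ 2 * s ^ 2) with h | h
          · nlinarith [Real.neg_one_le_cos (x * s), Real.cos_le_one (x * s), sq_nonneg s,
              sq_nonneg x]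
          · have hb : 1 - (x * s) ^ 2 / 2 ≤ Real.cos (x * s) := Real.one_sub_sq_div_two_le_cos
            nlinarith [sq_nonneg s, sq_nonneg x, sq_nonneg (x * s)]
        have h3 : p s * (1 - Real.cos (x * s)) / x ^ 2
            = (p s * ((1 - Real.cos (x * s)) * (1 + s ^ 2))) / (x ^ 2 * (1 + s ^ 2)) := by
          field_simp
        have h4 : 2 * (1 + x ^ 2) / x ^ 2 * (s ^ 2 / (1 + s ^ 2) * p s)
            = (p s * (2 * (1 + x ^ 2) * s ^ 2)) / (x ^ 2 * (1 + s ^ 2)) := by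
          field_simp
        rw [h3, h4]
        have h5 : p s * ((1 - Real.cos (x * s)) * (1 + s ^ 2))
            ≤ p s * (2 * (1 + x ^ 2) * s ^ 2) := mul_le_mul_of_nonneg_left key hps
        exact div_le_div_of_nonneg_right h5 (by positivity) |>.trans_eq rfl
  -- positive half
  have hB : ∫ s in Set.Ioi (0:ℝ), k s * Real.cos (x * s)
      = ∫ s in Set.Ioi (0:ℝ), p s * (1 - Real.cos (x * s)) / x ^ 2 := by
    have := aux_side p k x hx hmeas (fun y hy => hpos y (ne_of_gt hy)) hintp hkp
      hk1.integrableOn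
    simpa [mul_div_assoc] using this
  -- negative half via reflection
  have hA : ∫ s in Set.Iic (0:ℝ), k s * Real.cos (x * s)
      = ∫ s in Set.Iic (0:ℝ), p s * (1 - Real.cos (x * s)) / x ^ 2 := by
    set pn : ℝ → ℝ := fun y => p (-y) with hpn
    set kn : ℝ → ℝ := fun t => k (-t) with hkn
    have hmeasn : Measurable pn := hmeas.comp measurable_neg
    have hposn : ∀ y : ℝ, 0 < y → 0 ≤ pn y := fun y hy => hpos _ (by simpa using hy.ne')
    have hintpn : ∀ z : ℝ, 0 < z → IntegrableOn (fun y => y * pn y) (Set.Ioi z) := by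
      intro z hz
      have h2 := aux_neg_int (hintm z hz)
      have hset : (fun y : ℝ => -y) ⁻¹' (Set.Iio (-z)) = Set.Ioi z := by
        ext y; simp
      rw [hset] at h2
      exact h2.congr_fun (fun y hy => by
        simp only [abs_neg, neg_neg, abs_of_pos (hz.trans hy), hpn]) measurableSet_Ioi
    have hkpn : ∀ t : ℝ, 0 < t → kn t = ∫ y in Set.Ioi t, (y - t) * pn y := by
      intro t ht
      have h1 := hkm (-t) (by linarith)
      have h2 := integral_comp_neg_Iic (-t) (fun y => (y - t) * p (-y))
      simp only [neg_neg] at h2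
      rw [hkn]
      simp only
      rw [h1, ← h2, integral_Iic_eq_integral_Iio]
      exact setIntegral_congr_fun measurableSet_Iio fun y _ => by ring
    have hk1n : IntegrableOn kn (Set.Ioi 0) := by
      have h2 := aux_neg_int (hk1.integrableOn (s := Set.Iio 0))
      have hset : (fun y : ℝ => -y) ⁻¹' (Set.Iio 0) = Set.Ioi 0 := by ext y; simp
      rwa [hset] at h2
    have hside := aux_side pn kn x hx hmeasn hposn hintpn hkpn hk1n
    have e1 : ∫ s in Set.Iic (0:ℝ), k s * Real.cos (x * s)
        = ∫ t in Set.Ioi (0:ℝ), kn t * Real.cos (x * t) := by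
      have := integral_comp_neg_Ioi (0:ℝ) (fun s => k s * Real.cos (x * s))
      simp only [neg_zero, mul_neg, Real.cos_neg] at this
      rw [← this]
    have e2 : ∫ y in Set.Ioi (0:ℝ), pn y * ((1 - Real.cos (x * y)) / x ^ 2)
        = ∫ s in Set.Iic (0:ℝ), p s * (1 - Real.cos (x * s)) / x ^ 2 := by
      have := integral_comp_neg_Ioi (0:ℝ) (fun s => p s * (1 - Real.cos (x * s)) / x ^ 2)
      simp only [neg_zero, mul_neg, Real.cos_neg] at this
      rw [← this]
      refine setIntegral_congr_fun measurableSet_Ioi fun y _ => ?_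
      simp [hpn, mul_div_assoc]
    rw [e1, hside, e2]
  have heq : (∫ s : ℝ, k s * Real.cos (x * s))
      = ∫ s : ℝ, p s * (1 - Real.cos (x * s)) / x ^ 2 := by
    rw [← intervalIntegral.integral_Iic_add_Ioi hI1.integrableOn hI1.integrableOn,
      ← intervalIntegral.integral_Iic_add_Ioi hI2.integrableOn hI2.integrableOn, hA, hB]
  refine ⟨⟨hI1, hI2, heq⟩, fun hsupp => ?_⟩
  -- positivity
  set f2 : ℝ → ℝ := fun s => p s * (1 - Real.cos (x * s)) / x ^ 2 with hf2
  have h00 : volume ({0} : Set ℝ) = 0 := measure_singleton 0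
  have hne : ∀ᵐ s ∂(volume : Measure ℝ), s ≠ 0 := by
    rw [ae_iff]
    convert h00 using 2
    ext s; simp
  have hf2nn : 0 ≤ᵐ[volume] f2 := by
    filter_upwards [hne] with s hs
    have := Real.cos_le_one (x * s)
    have hps := hpos s hs
    apply div_nonneg (mul_nonneg hps (by linarith)) (le_of_lt hx2)
  have hNull : volume {s : ℝ | Real.cos (x * s) = 1} = 0 := by
    have hsub : {s : ℝ | Real.cos (x * s) = 1}
        ⊆ Set.range (fun n : ℤ => (n : ℝ) * (2 * π) / x) := by
      intro s hs
      rcases (Real.cos_eq_one_iff _).1 hs with ⟨n, hn⟩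
      exact ⟨n, by field_simp; linarith [hn]⟩
    exact measure_mono_null hsub ((Set.countable_range _).measure_zero _)
  have hss : {y : ℝ | 0 < p y}
      ⊆ Function.support f2 ∪ {s : ℝ | Real.cos (x * s) = 1} := by
    intro s hs
    by_cases h : Real.cos (x * s) = 1
    · exact Or.inr h
    · refine Or.inl (ne_of_gt ?_)
      have h1 : 0 < 1 - Real.cos (x * s) :=
        sub_pos.2 (lt_of_le_of_ne (Real.cos_le_one _) h)
      exact div_pos (mul_pos hs h1) hx2
  have hsp : 0 < volume (Function.support f2) := by
    refine lt_of_lt_of_le hsupp ((measure_mono hss).trans ?_)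
    calc volume (Function.support f2 ∪ {s : ℝ | Real.cos (x * s) = 1})
        ≤ volume (Function.support f2) + volume {s : ℝ | Real.cos (x * s) = 1} :=
          measure_union_le _ _
      _ = volume (Function.support f2) := by rw [hNull, add_zero]
  have := (integral_pos_iff_support_of_nonneg_ae hf2nn hI2).2 hsp
  rw [heq]
  exact this
end

section
/- Let p : ℝ \ {0} → [0,∞) be measurable with ∫_{-∞}^{∞} y²/(1+y²) p(y) dy < ∞, ∫_x^{∞} y p(y) dy < ∞ for every x > 0, and ∫_{-∞}^{-x} |y| p(y) dy < ∞ for every x > 0. Define k(x) = ∫_x^{∞} (y−x) p(y) dy for x > 0 and k(x) = ∫_{-∞}^{x} (x−y) p(y) dy for x < 0, and assume k ∈ L¹(ℝ). Assume in addition that there is m > 0 with p(y) ≥ m / y² for all y with 0 < |y| ≤ 1. Then for every real x with |x| ≥ 1: ∫_{-∞}^{∞} k(t) cos(xt) dt ≥ (m / |x|) · ∫_{-1}^{1} (1 − cos s)/s² ds. -/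
open MeasureTheory Real

lemma aux_negOn {g : ℝ → ℝ} {s : Set ℝ} (hg : IntegrableOn g s) :
    IntegrableOn (fun y => g (-y)) ((fun y : ℝ => -y) ⁻¹' s) := by
  have A : MeasurableEmbedding (fun x : ℝ => -x) :=
    (Homeomorph.neg ℝ).isClosedEmbedding.measurableEmbedding
  have h1 : Measure.map (fun x : ℝ => -x) (volume.restrict ((fun y : ℝ => -y) ⁻¹' s))
      = volume.restrict s := by
    rw [← A.restrict_map, Measure.map_neg_eq_self]
  have mp : MeasurePreserving (fun x : ℝ => -x)
      (volume.restrict ((fun y : ℝ => -y) ⁻¹' s)) (volume.restrict s) := ⟨measurable_neg, h1⟩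
  exact (mp.integrable_comp_emb A).mpr hg

lemma aux_f_nonneg (s : ℝ) : 0 ≤ (1 - Real.cos s) / s ^ 2 :=
  div_nonneg (by nlinarith [Real.cos_le_one s]) (sq_nonneg s)

lemma aux_f_le (s : ℝ) : (1 - Real.cos s) / s ^ 2 ≤ 1 / 2 := by
  rcases eq_or_ne s 0 with h | h
  · simp [h]
  · rw [div_le_iff₀ (by positivity)]
    have := Real.one_sub_sq_div_two_le_cos (x := s)
    nlinarith

lemma aux_f_int (a b : ℝ) :
    IntervalIntegrable (fun s => (1 - Real.cos s) / s ^ 2) volume a b := by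
  rw [intervalIntegrable_iff]
  apply Integrable.mono' (g := fun _ => (1/2 : ℝ))
  · exact integrableOn_const measure_Ioc_lt_top.ne
  · exact ((measurable_const.sub Real.measurable_cos).div
      (measurable_id.pow_const 2)).aestronglyMeasurable.restrict
  · apply ae_of_all
    intro s
    rw [Real.norm_eq_abs, abs_of_nonneg (aux_f_nonneg s)]
    exact aux_f_le s


lemma aux_inner (x y : ℝ) (hx : x ≠ 0) :
    ∫ t in (0:ℝ)..y, (y - t) * Real.cos (x * t) = (1 - Real.cos (x * y)) / x ^ 2 := by
  have hxt : ∀ t : ℝ, HasDerivAt (fun t => x * t) x t := fun t => by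
    simpa using (hasDerivAt_id t).const_mul x
  have hderiv : ∀ t ∈ Set.uIcc (0:ℝ) y,
      HasDerivAt (fun t => (y - t) * Real.sin (x * t) / x - Real.cos (x * t) / x ^ 2)
        ((y - t) * Real.cos (x * t)) t := by
    intro t _
    have h1 : HasDerivAt (fun t => Real.sin (x * t)) (Real.cos (x * t) * x) t := (hxt t).sin
    have h2 : HasDerivAt (fun t : ℝ => y - t) (-1) t := (hasDerivAt_id t).const_sub y
    have h3 : HasDerivAt (fun t => (y - t) * Real.sin (x * t) / x)
        ((-1 * Real.sin (x * t) + (y - t) * (Real.cos (x * t) * x)) / x) t := (h2.mul h1).div_const x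
    have h5 := ((hxt t).cos).div_const (x ^ 2)
    refine (h3.sub h5).congr_deriv ?_
    field_simp
    ring
  have hint : IntervalIntegrable (fun t => (y - t) * Real.cos (x * t)) volume 0 y := by
    apply Continuous.intervalIntegrable
    fun_prop
  rw [intervalIntegral.integral_eq_sub_of_hasDerivAt hderiv hint]
  simp
  field_simp
  ring

lemma aux_core (q g : ℝ → ℝ) (hq : Measurable q) (hq0 : ∀ y, 0 < y → 0 ≤ q y)
    (hiq : ∀ c : ℝ, 0 < c → IntegrableOn (fun y => y * q y) (Set.Ioi c))
    (hg : ∀ t, 0 < t → g t = ∫ y in Set.Ioi t, (y - t) * q y)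
    (hgi : IntegrableOn g (Set.Ioi 0))
    (x : ℝ) (hx : x ≠ 0) :
    ∫ t in Set.Ioi 0, g t * Real.cos (x * t)
      = ∫ y in Set.Ioi 0, q y * ((1 - Real.cos (x * y)) / x ^ 2) := by
  -- integrability of q on Ioi t
  have hq_int : ∀ t : ℝ, 0 < t → IntegrableOn q (Set.Ioi t) := by
    intro t ht
    apply Integrable.mono' ((hiq t ht).const_mul t⁻¹) hq.aestronglyMeasurable.restrict
    filter_upwards [ae_restrict_mem measurableSet_Ioi] with y hy
    have hy0 : (0:ℝ) < y := ht.trans hy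
    have hq0y : 0 ≤ q y := hq0 y hy0
    rw [Real.norm_eq_abs, abs_of_nonneg hq0y]
    calc q y = t⁻¹ * (t * q y) := by field_simp
    _ ≤ t⁻¹ * (y * q y) := by
        apply mul_le_mul_of_nonneg_left _ (inv_nonneg.mpr ht.le)
        exact mul_le_mul_of_nonneg_right (le_of_lt hy) hq0y
  have hyt : ∀ t : ℝ, 0 < t → IntegrableOn (fun y => (y - t) * q y) (Set.Ioi t) := by
    intro t ht
    have := (hiq t ht).sub ((hq_int t ht).const_mul t)
    simpa [sub_mul, Pi.sub_def] using this
  set μ := volume.restrict (Set.Ioi (0:ℝ)) with hμ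
  set F : ℝ × ℝ → ℝ := fun z =>
    Set.indicator {z : ℝ × ℝ | z.1 < z.2} (fun z => (z.2 - z.1) * q z.2) z * Real.cos (x * z.1)
    with hF
  have hFm : Measurable F := by
    apply Measurable.mul
    · exact Measurable.indicator ((measurable_snd.sub measurable_fst).mul (hq.comp measurable_snd))
        (measurableSet_lt measurable_fst measurable_snd)
    · exact Real.measurable_cos.comp (measurable_fst.const_mul x)
  have hslice : ∀ t y : ℝ, F (t, y) =
      (Set.indicator (Set.Ioi t) (fun y => (y - t) * q y) y) * Real.cos (x * t) := by
    intro t y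
    simp only [hF, Set.indicator_apply, Set.mem_setOf_eq, Set.mem_Ioi]
  -- slices integrable
  have hslice_int : ∀ᵐ t ∂μ, Integrable (fun y => F (t, y)) volume := by
    filter_upwards [ae_restrict_mem measurableSet_Ioi] with t ht
    simp only [hslice t]
    exact (((hyt t ht).integrable_indicator measurableSet_Ioi)).mul_const _
  -- norm integral computation
  have hnormeq : ∀ t : ℝ, 0 < t →
      (∫ y, ‖F (t, y)‖) = g t * |Real.cos (x * t)| := by
    intro t ht
    simp only [hslice t, norm_mul]
    rw [integral_mul_const]
    congr 1
    have : (fun y => ‖Set.indicator (Set.Ioi t) (fun y => (y - t) * q y) y‖)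
        = Set.indicator (Set.Ioi t) (fun y => ‖(y - t) * q y‖) := by
      funext y; exact norm_indicator_eq_indicator_norm _ y
    rw [this, integral_indicator measurableSet_Ioi, hg t ht]
    apply setIntegral_congr_fun measurableSet_Ioi
    intro y hy
    show ‖(y - t) * q y‖ = (y - t) * q y
    rw [Real.norm_eq_abs, abs_of_nonneg]
    exact mul_nonneg (sub_nonneg.mpr (le_of_lt hy)) (hq0 y (ht.trans hy))
  have hnorm_int : Integrable (fun t => ∫ y, ‖F (t, y)‖) μ := by
    have h1 : Integrable (fun t => g t * |Real.cos (x * t)|) μ := by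
      apply Integrable.mono' hgi.norm
      · exact hgi.aestronglyMeasurable.mul
          ((Real.measurable_cos.comp (measurable_id.const_mul x)).abs.aestronglyMeasurable)
      · apply ae_of_all
        intro t
        rw [Real.norm_eq_abs, abs_mul, abs_abs, Real.norm_eq_abs]
        calc |g t| * |Real.cos (x * t)| ≤ |g t| * 1 :=
          mul_le_mul_of_nonneg_left (abs_cos_le_one _) (abs_nonneg _)
        _ = |g t| := mul_one _
    apply h1.congr
    filter_upwards [ae_restrict_mem measurableSet_Ioi] with t ht
    exact (hnormeq t ht).symm
  have hF_int : Integrable F (μ.prod volume) :=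
    (integrable_prod_iff hFm.aestronglyMeasurable).mpr ⟨hslice_int, hnorm_int⟩
  have hswap := integral_integral_swap (f := fun t y => F (t, y)) hF_int
  -- LHS identification
  have hL : (∫ t, (∫ y, F (t, y)) ∂μ) = ∫ t in Set.Ioi 0, g t * Real.cos (x * t) := by
    apply integral_congr_ae
    filter_upwards [ae_restrict_mem measurableSet_Ioi] with t ht
    simp only [hslice t]
    rw [integral_mul_const, integral_indicator measurableSet_Ioi, hg t ht]
  -- RHS identification
  have hR : ∀ y : ℝ, (∫ t, F (t, y) ∂μ)
      = Set.indicator (Set.Ioi 0) (fun y => q y * ((1 - Real.cos (x * y)) / x ^ 2)) y := by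
    intro y
    have hfy : (fun t => F (t, y)) =
        Set.indicator (Set.Iio y) (fun t => (y - t) * q y * Real.cos (x * t)) := by
      funext t
      simp only [hF, Set.indicator_apply, Set.mem_setOf_eq, Set.mem_Iio]
      by_cases h : t < y <;> simp [h]
    rw [hfy, integral_indicator measurableSet_Iio, hμ, Measure.restrict_restrict measurableSet_Iio]
    rcases le_or_gt y 0 with hy | hy
    · have he : Set.Iio y ∩ Set.Ioi 0 = ∅ := by
        ext t; simp only [Set.mem_inter_iff, Set.mem_Iio, Set.mem_Ioi, Set.mem_empty_iff_false,
          iff_false, not_and]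
        intro h1; linarith
      rw [he, Set.indicator_of_notMem (by simpa using hy)]
      simp
    · have he : Set.Iio y ∩ Set.Ioi 0 = Set.Ioo 0 y := by
        ext t; simp only [Set.mem_inter_iff, Set.mem_Iio, Set.mem_Ioi, Set.mem_Ioo]; tauto
      rw [he, Set.indicator_of_mem (Set.mem_Ioi.mpr hy)]
      have : ∫ t in Set.Ioo 0 y, (y - t) * q y * Real.cos (x * t)
          = q y * ∫ t in Set.Ioo 0 y, (y - t) * Real.cos (x * t) := by
        rw [← MeasureTheory.integral_const_mul]
        apply setIntegral_congr_fun measurableSet_Ioo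
        intro t _; ring
      rw [this, ← integral_Ioc_eq_integral_Ioo, ← intervalIntegral.integral_of_le hy.le,
        aux_inner x y hx]
  have hRint : (∫ y, (∫ t, F (t, y) ∂μ))
      = ∫ y in Set.Ioi 0, q y * ((1 - Real.cos (x * y)) / x ^ 2) := by
    rw [integral_congr_ae (ae_of_all _ hR), integral_indicator measurableSet_Ioi]
  calc ∫ t in Set.Ioi 0, g t * Real.cos (x * t) = ∫ t, (∫ y, F (t, y)) ∂μ := hL.symm
  _ = ∫ y, (∫ t, F (t, y) ∂μ) := hswap
  _ = ∫ y in Set.Ioi 0, q y * ((1 - Real.cos (x * y)) / x ^ 2) := hRint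


/-- The key estimate of Proposition 7.6 of the paper: if moreover `p(y) ≥ m/y²`
for `0 < |y| ≤ 1`, then `∫ k(t) cos(xt) dt ≥ (m/|x|) ∫_{-1}^{1} (1 − cos s)/s² ds`
for `|x| ≥ 1`. -/
theorem stmt8 (p k : ℝ → ℝ) (hmeas : Measurable p)
    (hpos : ∀ y : ℝ, y ≠ 0 → 0 ≤ p y)
    (hint : Integrable (fun y => y ^ 2 / (1 + y ^ 2) * p y))
    (hintp : ∀ x : ℝ, 0 < x → IntegrableOn (fun y => y * p y) (Set.Ioi x))
    (hintm : ∀ x : ℝ, 0 < x → IntegrableOn (fun y => |y| * p y) (Set.Iio (-x)))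
    (hkp : ∀ x : ℝ, 0 < x → k x = ∫ y in Set.Ioi x, (y - x) * p y)
    (hkm : ∀ x : ℝ, x < 0 → k x = ∫ y in Set.Iio x, (x - y) * p y)
    (hk1 : Integrable k)
    (m : ℝ) (hm : 0 < m)
    (hlow : ∀ y : ℝ, y ≠ 0 → |y| ≤ 1 → m / y ^ 2 ≤ p y) :
    ∀ x : ℝ, 1 ≤ |x| →
      (m / |x|) * ∫ s in (-1:ℝ)..1, (1 - Real.cos s) / s ^ 2
        ≤ ∫ s : ℝ, k s * Real.cos (x * s) := by
  intro x hx1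
  have hx0 : x ≠ 0 := by
    intro h; rw [h, abs_zero] at hx1; linarith
  have hax : 0 < |x| := lt_of_lt_of_le one_pos hx1
  have hcosm : Measurable fun s : ℝ => Real.cos (x * s) :=
    Real.measurable_cos.comp (measurable_id.const_mul x)
  have hkcos : Integrable (fun s => k s * Real.cos (x * s)) := by
    apply Integrable.mono' hk1.norm (hk1.1.mul hcosm.aestronglyMeasurable)
    apply ae_of_all
    intro s
    show ‖k s * Real.cos (x * s)‖ ≤ ‖k s‖
    rw [norm_mul]
    calc ‖k s‖ * ‖Real.cos (x * s)‖ ≤ ‖k s‖ * 1 := by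
          apply mul_le_mul_of_nonneg_left _ (norm_nonneg _)
          rw [Real.norm_eq_abs]; exact abs_cos_le_one _
    _ = ‖k s‖ := mul_one _
  have hsplit : (∫ s, k s * Real.cos (x * s))
      = (∫ s in Set.Iic (0:ℝ), k s * Real.cos (x * s))
        + ∫ s in Set.Ioi (0:ℝ), k s * Real.cos (x * s) :=
    (intervalIntegral.integral_Iic_add_Ioi hkcos.integrableOn hkcos.integrableOn).symm
  have hIic : (∫ s in Set.Iic (0:ℝ), k s * Real.cos (x * s))
      = ∫ t in Set.Ioi (0:ℝ), k (-t) * Real.cos (x * t) := by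
    have h := integral_comp_neg_Ioi (0:ℝ) (fun s => k s * Real.cos (x * s))
    simp only [neg_zero] at h
    rw [← h]
    apply setIntegral_congr_fun measurableSet_Ioi
    intro t _
    simp [mul_neg, Real.cos_neg]
  have posEq := aux_core p k hmeas (fun y hy => hpos y (ne_of_gt hy)) hintp hkp
    hk1.integrableOn x hx0
  -- negative side
  have hpre : ∀ c : ℝ, (fun y : ℝ => -y) ⁻¹' Set.Iio (-c) = Set.Ioi c := by
    intro c; ext y; simp
  have hiq' : ∀ c : ℝ, 0 < c → IntegrableOn (fun y => y * p (-y)) (Set.Ioi c) := by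
    intro c hc
    have h1 := aux_negOn (hintm c hc)
    rw [hpre c] at h1
    apply h1.congr_fun _ measurableSet_Ioi
    intro y hy
    show |(-y)| * p (-y) = y * p (-y)
    rw [abs_neg, abs_of_pos (hc.trans hy)]
  have hg' : ∀ t : ℝ, 0 < t → k (-t) = ∫ y in Set.Ioi t, (y - t) * p (-y) := by
    intro t ht
    rw [hkm (-t) (by linarith), ← integral_Iic_eq_integral_Iio,
      ← integral_comp_neg_Ioi]
    apply setIntegral_congr_fun measurableSet_Ioi
    intro y _
    show (-t - -y) * p (-y) = (y - t) * p (-y)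
    congr 1
    ring
  have hgi' : IntegrableOn (fun t => k (-t)) (Set.Ioi 0) := by
    have h1 := aux_negOn (hk1.integrableOn (s := Set.Iio (-0)))
    rw [hpre 0] at h1
    exact h1
  have negEq := aux_core (fun y => p (-y)) (fun t => k (-t)) (hmeas.comp measurable_neg)
    (fun y hy => hpos (-y) (by simpa using ne_of_gt hy)) hiq' hg' hgi' x hx0
  -- integrability of the Fourier-side integrands
  have hFm : Measurable fun y : ℝ => (1 - Real.cos (x * y)) / x ^ 2 :=
    (measurable_const.sub (Real.measurable_cos.comp (measurable_id.const_mul x))).div_const _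
  have hF0 : ∀ y : ℝ, 0 ≤ (1 - Real.cos (x * y)) / x ^ 2 := fun y =>
    div_nonneg (by nlinarith [Real.cos_le_one (x * y)]) (sq_nonneg x)
  have hdom : ∀ q : ℝ → ℝ, Measurable q → (∀ y, 0 < y → 0 ≤ q y) →
      IntegrableOn (fun y => y ^ 2 / (1 + y ^ 2) * q y) (Set.Ioi 0) →
      IntegrableOn (fun y => q y * ((1 - Real.cos (x * y)) / x ^ 2)) (Set.Ioi 0) := by
    intro q hq hq0 hqi
    apply Integrable.mono' (hqi.const_mul ((x ^ 2 / 2 + 2) / x ^ 2))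
      ((hq.mul hFm).aestronglyMeasurable.restrict)
    filter_upwards [ae_restrict_mem measurableSet_Ioi] with y hy
    have hqy := hq0 y hy
    rw [Real.norm_eq_abs, Pi.mul_apply, abs_of_nonneg (mul_nonneg hqy (hF0 y))]
    have key : (1 - Real.cos (x * y)) / x ^ 2 ≤ ((x ^ 2 / 2 + 2) / x ^ 2) * (y ^ 2 / (1 + y ^ 2)) := by
      have h1 : 1 - Real.cos (x * y) ≤ x ^ 2 * y ^ 2 / 2 := by
        have := Real.one_sub_sq_div_two_le_cos (x := x * y)
        nlinarith [mul_pow x y 2]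
      have h2 : 1 - Real.cos (x * y) ≤ 2 := by nlinarith [Real.neg_one_le_cos (x * y)]
      rw [div_mul_div_comm, div_le_div_iff₀ (by positivity) (by positivity)]
      nlinarith [mul_le_mul_of_nonneg_left h1 (sq_nonneg x),
        mul_le_mul_of_nonneg_left h2 (mul_nonneg (sq_nonneg x) (sq_nonneg y)),
        sq_nonneg y, sq_nonneg x, sq_nonneg (x * y)]
    calc q y * ((1 - Real.cos (x * y)) / x ^ 2)
        ≤ q y * (((x ^ 2 / 2 + 2) / x ^ 2) * (y ^ 2 / (1 + y ^ 2))) :=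
          mul_le_mul_of_nonneg_left key hqy
    _ = (x ^ 2 / 2 + 2) / x ^ 2 * (y ^ 2 / (1 + y ^ 2) * q y) := by ring
  have hposI : IntegrableOn (fun y => p y * ((1 - Real.cos (x * y)) / x ^ 2)) (Set.Ioi 0) :=
    hdom p hmeas (fun y hy => hpos y (ne_of_gt hy)) hint.integrableOn
  have hnegI : IntegrableOn (fun y => p (-y) * ((1 - Real.cos (x * y)) / x ^ 2)) (Set.Ioi 0) := by
    apply hdom (fun y => p (-y)) (hmeas.comp measurable_neg)
      (fun y hy => hpos (-y) (by simpa using ne_of_gt hy))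
    have h1 := aux_negOn (hint.integrableOn (s := Set.Iio (-0)))
    rw [hpre 0] at h1
    apply h1.congr_fun _ measurableSet_Ioi
    intro y _
    show (-y) ^ 2 / (1 + (-y) ^ 2) * p (-y) = y ^ 2 / (1 + y ^ 2) * p (-y)
    rw [neg_sq]
  -- lower bound for each side
  have hlowI : IntegrableOn (fun y => m * ((1 - Real.cos (x * y)) / (x * y) ^ 2)) (Set.Ioc 0 1) := by
    apply Integrable.mono' (g := fun _ => m * (1 / 2))
    · exact integrableOn_const measure_Ioc_lt_top.ne
    · exact (((measurable_const.sub (Real.measurable_cos.comp (measurable_id.const_mul x))).div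
        ((measurable_id.const_mul x).pow_const 2)).const_mul m).aestronglyMeasurable.restrict
    · apply ae_of_all
      intro y
      rw [Real.norm_eq_abs, abs_of_nonneg (mul_nonneg hm.le (aux_f_nonneg (x * y)))]
      exact mul_le_mul_of_nonneg_left (aux_f_le (x * y)) hm.le
  have hstep : ∀ q : ℝ → ℝ, (∀ y, 0 < y → 0 ≤ q y) →
      (∀ y, 0 < y → y ≤ 1 → m / y ^ 2 ≤ q y) →
      IntegrableOn (fun y => q y * ((1 - Real.cos (x * y)) / x ^ 2)) (Set.Ioi 0) →
      m * ∫ y in (0:ℝ)..1, (1 - Real.cos (x * y)) / (x * y) ^ 2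
        ≤ ∫ y in Set.Ioi 0, q y * ((1 - Real.cos (x * y)) / x ^ 2) := by
    intro q hq0 hql hqi
    have e1 : m * ∫ y in (0:ℝ)..1, (1 - Real.cos (x * y)) / (x * y) ^ 2
        = ∫ y in Set.Ioc (0:ℝ) 1, m * ((1 - Real.cos (x * y)) / (x * y) ^ 2) := by
      rw [intervalIntegral.integral_of_le zero_le_one, ← MeasureTheory.integral_const_mul]
    have le1 : (∫ y in Set.Ioc (0:ℝ) 1, m * ((1 - Real.cos (x * y)) / (x * y) ^ 2))
        ≤ ∫ y in Set.Ioc (0:ℝ) 1, q y * ((1 - Real.cos (x * y)) / x ^ 2) := by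
      apply setIntegral_mono_on hlowI (hqi.mono_set Set.Ioc_subset_Ioi_self) measurableSet_Ioc
      intro y hy
      have hy0 : (0:ℝ) < y := hy.1
      have hy0' : y ≠ 0 := ne_of_gt hy0
      have hx2 : x ^ 2 ≠ 0 := pow_ne_zero 2 hx0
      have hy2 : y ^ 2 ≠ 0 := pow_ne_zero 2 hy0'
      have : m * ((1 - Real.cos (x * y)) / (x * y) ^ 2)
          = (m / y ^ 2) * ((1 - Real.cos (x * y)) / x ^ 2) := by
        rw [mul_pow, div_mul_div_comm, mul_div_assoc, mul_comm (y ^ 2) (x ^ 2)]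
      rw [this]
      exact mul_le_mul_of_nonneg_right (hql y hy0 hy.2) (hF0 y)
    have le2 : (∫ y in Set.Ioc (0:ℝ) 1, q y * ((1 - Real.cos (x * y)) / x ^ 2))
        ≤ ∫ y in Set.Ioi (0:ℝ), q y * ((1 - Real.cos (x * y)) / x ^ 2) := by
      apply setIntegral_mono_set hqi
      · filter_upwards [ae_restrict_mem measurableSet_Ioi] with y hy
        exact mul_nonneg (hq0 y hy) (hF0 y)
      · exact HasSubset.Subset.eventuallyLE Set.Ioc_subset_Ioi_self
    linarith
  have hA := hstep p (fun y hy => hpos y (ne_of_gt hy))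
    (fun y hy hy1 => hlow y (ne_of_gt hy) (by rw [abs_of_pos hy]; exact hy1)) hposI
  have hB := hstep (fun y => p (-y)) (fun y hy => hpos (-y) (by simpa using ne_of_gt hy))
    (fun y hy hy1 => by
      have := hlow (-y) (by simpa using ne_of_gt hy) (by rw [abs_neg, abs_of_pos hy]; exact hy1)
      rwa [neg_sq] at this) hnegI
  -- substitution in the interval integral
  have hcomp : (∫ y in (0:ℝ)..1, (1 - Real.cos (x * y)) / (x * y) ^ 2)
      = |x|⁻¹ * ∫ s in (0:ℝ)..|x|, (1 - Real.cos s) / s ^ 2 := by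
    have h := intervalIntegral.integral_comp_mul_left (a := (0:ℝ)) (b := 1)
      (f := fun s => (1 - Real.cos s) / s ^ 2) (c := x) hx0
    simp only [mul_zero, mul_one, smul_eq_mul] at h
    rw [h]
    rcases abs_cases x with ⟨h1, _⟩ | ⟨h1, hneg⟩
    · rw [h1]
    · rw [h1]
      have h2 := intervalIntegral.integral_comp_neg (a := (0:ℝ)) (b := -x)
        (f := fun s => (1 - Real.cos s) / s ^ 2)
      simp only [neg_neg, neg_zero] at h2
      have h3 : (∫ s in (0:ℝ)..(-x), (1 - Real.cos (-s)) / (-s) ^ 2)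
          = ∫ s in (0:ℝ)..(-x), (1 - Real.cos s) / s ^ 2 :=
        intervalIntegral.integral_congr (fun s _ => by rw [Real.cos_neg, neg_sq])
      have h4 : (∫ s in (0:ℝ)..x, (1 - Real.cos s) / s ^ 2)
          = - ∫ s in (0:ℝ)..(-x), (1 - Real.cos s) / s ^ 2 := by
        rw [← h3, h2, intervalIntegral.integral_symm]
      rw [h4, inv_neg]
      ring
  have hmono2 : (∫ s in (0:ℝ)..1, (1 - Real.cos s) / s ^ 2)
      ≤ ∫ s in (0:ℝ)..|x|, (1 - Real.cos s) / s ^ 2 := by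
    have hadd := intervalIntegral.integral_add_adjacent_intervals (aux_f_int 0 1) (aux_f_int 1 |x|)
    have hnn : 0 ≤ ∫ s in (1:ℝ)..|x|, (1 - Real.cos s) / s ^ 2 :=
      intervalIntegral.integral_nonneg hx1 (fun s _ => aux_f_nonneg s)
    linarith
  have heven : (∫ s in (-1:ℝ)..1, (1 - Real.cos s) / s ^ 2)
      = 2 * ∫ s in (0:ℝ)..1, (1 - Real.cos s) / s ^ 2 := by
    have h2 := intervalIntegral.integral_comp_neg (a := (0:ℝ)) (b := 1)
      (f := fun s => (1 - Real.cos s) / s ^ 2)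
    simp only [neg_zero] at h2
    have h3 : (∫ s in (0:ℝ)..1, (1 - Real.cos (-s)) / (-s) ^ 2)
        = ∫ s in (0:ℝ)..1, (1 - Real.cos s) / s ^ 2 :=
      intervalIntegral.integral_congr (fun s _ => by rw [Real.cos_neg, neg_sq])
    have hadd := intervalIntegral.integral_add_adjacent_intervals (aux_f_int (-1) 0) (aux_f_int 0 1)
    rw [← hadd, ← h2, h3]
    ring
  -- final arithmetic
  have hI1 : 0 ≤ ∫ s in (0:ℝ)..1, (1 - Real.cos s) / s ^ 2 :=
    intervalIntegral.integral_nonneg zero_le_one (fun s _ => aux_f_nonneg s)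
  have hfinal : (m / |x|) * ∫ s in (-1:ℝ)..1, (1 - Real.cos s) / s ^ 2
      ≤ 2 * (m * ∫ y in (0:ℝ)..1, (1 - Real.cos (x * y)) / (x * y) ^ 2) := by
    rw [heven, hcomp]
    have : m / |x| * (2 * ∫ s in (0:ℝ)..1, (1 - Real.cos s) / s ^ 2)
        = 2 * (m * (|x|⁻¹ * ∫ s in (0:ℝ)..1, (1 - Real.cos s) / s ^ 2)) := by
      field_simp
    rw [this]
    apply mul_le_mul_of_nonneg_left _ (by norm_num : (0:ℝ) ≤ 2)
    apply mul_le_mul_of_nonneg_left _ hm.le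
    exact mul_le_mul_of_nonneg_left hmono2 (inv_nonneg.mpr hax.le)
  rw [hsplit, hIic]
  calc (m / |x|) * ∫ s in (-1:ℝ)..1, (1 - Real.cos s) / s ^ 2
      ≤ 2 * (m * ∫ y in (0:ℝ)..1, (1 - Real.cos (x * y)) / (x * y) ^ 2) := hfinal
  _ ≤ (∫ t in Set.Ioi (0:ℝ), k (-t) * Real.cos (x * t))
      + ∫ s in Set.Ioi (0:ℝ), k s * Real.cos (x * s) := by
    have negEq' : (∫ t in Set.Ioi (0:ℝ), k (-t) * Real.cos (x * t))
        = ∫ y in Set.Ioi (0:ℝ), p (-y) * ((1 - Real.cos (x * y)) / x ^ 2) := negEq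
    rw [negEq', posEq]
    linarith
end

section
/- Let m ∈ ℕ, let c₀, c₁, …, c_m ∈ ℂ, and let ν₁, …, ν_m be distinct nonzero real numbers. Suppose that for every t ∈ ℝ the value Q(t) = c₀ + Σ_{k=1}^{m} c_k e^{i ν_k t} is a nonnegative real number. Then c₀ is real with c₀ ≥ 0, and |c_k| ≤ c₀ for every k = 1, …, m. In particular, if c₀ = 0 then c_k = 0 for all k. -/
open Complex Filter

lemma norm_exp_I_mul (μ t : ℝ) : ‖Complex.exp (Complex.I * μ * t)‖ = 1 := by
  simp [Complex.norm_exp]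

lemma cont_exp_I_mul (μ : ℝ) : Continuous fun t : ℝ => Complex.exp (Complex.I * μ * t) := by
  fun_prop

lemma mean_aux {ι : Type*} (s : Finset ι) (a₀ : ℂ) (a : ι → ℂ) (μ : ι → ℝ)
    (hμ : ∀ j ∈ s, μ j ≠ 0) :
    Tendsto (fun T : ℝ => (T : ℂ)⁻¹ *
        ∫ t in (0:ℝ)..T, (a₀ + ∑ j ∈ s, a j * Complex.exp (Complex.I * μ j * t)))
      atTop (nhds a₀) := by
  have hint : ∀ j ∈ s, ∀ T : ℝ,
      (∫ t in (0:ℝ)..T, a j * Complex.exp (Complex.I * μ j * t))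
        = a j * ((Complex.exp (Complex.I * μ j * T) - 1) / (Complex.I * μ j)) := by
    intro j hj T
    have hc : (Complex.I * μ j : ℂ) ≠ 0 :=
      mul_ne_zero Complex.I_ne_zero (Complex.ofReal_ne_zero.mpr (hμ j hj))
    rw [intervalIntegral.integral_const_mul, integral_exp_mul_complex hc]
    simp
  have key : ∀ T : ℝ, (∫ t in (0:ℝ)..T, (a₀ + ∑ j ∈ s, a j * Complex.exp (Complex.I * μ j * t)))
      = a₀ * T + ∑ j ∈ s, a j * ((Complex.exp (Complex.I * μ j * T) - 1) / (Complex.I * μ j)) := by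
    intro T
    rw [intervalIntegral.integral_add, intervalIntegral.integral_finset_sum]
    · rw [intervalIntegral.integral_const]
      simp only [sub_zero, smul_eq_mul]
      rw [mul_comm]
      congr 1
      exact Finset.sum_congr rfl fun j hj => hint j hj T
    · exact fun j hj => ((continuous_const.mul (cont_exp_I_mul (μ j))).intervalIntegrable _ _)
    · exact intervalIntegrable_const
    · exact ((continuous_finset_sum s fun j hj =>
        (continuous_const.mul (cont_exp_I_mul (μ j)))).intervalIntegrable _ _)
  set R : ℝ → ℂ := fun T => ∑ j ∈ s, a j * ((Complex.exp (Complex.I * μ j * T) - 1) / (Complex.I * μ j))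
  set C : ℝ := ∑ j ∈ s, ‖a j‖ * (2 / |μ j|)
  have hR : ∀ T, ‖R T‖ ≤ C := by
    intro T
    refine (norm_sum_le _ _).trans (Finset.sum_le_sum fun j hj => ?_)
    rw [norm_mul]
    refine mul_le_mul_of_nonneg_left ?_ (norm_nonneg _)
    rw [norm_div]
    have h1 : ‖Complex.exp (Complex.I * μ j * T) - 1‖ ≤ 2 := by
      refine (norm_sub_le _ _).trans ?_
      rw [norm_exp_I_mul]; norm_num
    have h2 : ‖(Complex.I * μ j : ℂ)‖ = |μ j| := by
      simp
    rw [h2]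
    gcongr
  have hRz : Tendsto (fun T : ℝ => (T : ℂ)⁻¹ * R T) atTop (nhds 0) := by
    apply squeeze_zero_norm' (a := fun T : ℝ => T⁻¹ * C)
    · filter_upwards [eventually_gt_atTop (0:ℝ)] with T hT
      rw [norm_mul]
      have : ‖(T:ℂ)⁻¹‖ = T⁻¹ := by
        rw [norm_inv, Complex.norm_real, Real.norm_eq_abs, abs_of_pos hT]
      rw [this]
      exact mul_le_mul_of_nonneg_left (hR T) (by positivity)
    · have := (tendsto_inv_atTop_zero (𝕜 := ℝ)).mul_const C
      simpa using this
  have heq : ∀ᶠ T : ℝ in atTop, a₀ + (T : ℂ)⁻¹ * R T =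
      (T : ℂ)⁻¹ * ∫ t in (0:ℝ)..T, (a₀ + ∑ j ∈ s, a j * Complex.exp (Complex.I * μ j * t)) := by
    filter_upwards [eventually_gt_atTop (0:ℝ)] with T hT
    rw [key T, mul_add]
    congr 1
    have hTne : (T : ℂ) ≠ 0 := Complex.ofReal_ne_zero.mpr hT.ne'
    field_simp
  have := (tendsto_const_nhds (x := a₀) (f := atTop (α := ℝ))).add hRz
  rw [add_zero] at this
  exact this.congr' heq

/-- The almost-periodicity lemma (relations (9.24)–(9.25), (9.44)–(9.45) of the
paper): if the trigonometric polynomial `Q(t) = c₀ + Σ c_k e^{iν_k t}` with distinct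
nonzero real frequencies takes nonnegative real values for all real `t`, then `c₀`
is real nonnegative and `|c_k| ≤ c₀`; in particular `c₀ = 0` forces all `c_k = 0`. -/
theorem stmt11 (m : ℕ) (c₀ : ℂ) (c : Fin m → ℂ) (ν : Fin m → ℝ)
    (hν0 : ∀ k, ν k ≠ 0) (hνinj : Function.Injective ν)
    (hQ : ∀ t : ℝ,
      (c₀ + ∑ k, c k * Complex.exp (Complex.I * (ν k) * t)).im = 0 ∧
      0 ≤ (c₀ + ∑ k, c k * Complex.exp (Complex.I * (ν k) * t)).re) :
    c₀.im = 0 ∧ 0 ≤ c₀.re ∧ (∀ k, ‖c k‖ ≤ c₀.re) ∧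
      (c₀ = 0 → ∀ k, c k = 0) := by
  set Q : ℝ → ℂ := fun t => c₀ + ∑ k, c k * Complex.exp (Complex.I * (ν k) * t) with hQdef
  have hreal : ∀ t, Q t = (((Q t).re : ℝ) : ℂ) := by
    intro t
    apply Complex.ext
    · simp
    · exact (hQ t).1.trans (by simp)
  set A : ℝ → ℂ := fun T => (T : ℂ)⁻¹ * ∫ t in (0:ℝ)..T, Q t with hAdef
  have hA : Tendsto A atTop (nhds c₀) := mean_aux Finset.univ c₀ c ν (fun j _ => hν0 j)
  set B : ℝ → ℝ := fun T => T⁻¹ * ∫ t in (0:ℝ)..T, (Q t).re with hBdef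
  have hAB : ∀ T, A T = ((B T : ℝ) : ℂ) := by
    intro T
    have h1 : (∫ t in (0:ℝ)..T, Q t) = (((∫ t in (0:ℝ)..T, (Q t).re : ℝ)) : ℂ) := by
      rw [← intervalIntegral.integral_ofReal]
      exact intervalIntegral.integral_congr fun t _ => hreal t
    show (T : ℂ)⁻¹ * (∫ t in (0:ℝ)..T, Q t)
        = ((T⁻¹ * ∫ t in (0:ℝ)..T, (Q t).re : ℝ) : ℂ)
    rw [h1]
    push_cast
    ring
  have him : c₀.im = 0 := by
    have h1 : Tendsto (fun T => (A T).im) atTop (nhds c₀.im) :=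
      (Complex.continuous_im.tendsto c₀).comp hA
    have h2 : (fun T => (A T).im) = fun _ => (0:ℝ) := funext fun T => by rw [hAB]; simp
    rw [h2] at h1
    exact tendsto_nhds_unique h1 tendsto_const_nhds
  have hreB : Tendsto B atTop (nhds c₀.re) := by
    have h1 : Tendsto (fun T => (A T).re) atTop (nhds c₀.re) :=
      (Complex.continuous_re.tendsto c₀).comp hA
    have h2 : (fun T => (A T).re) = B := funext fun T => by rw [hAB]; simp
    rwa [h2] at h1
  have hBnn : ∀ᶠ T : ℝ in atTop, 0 ≤ B T := by
    filter_upwards [eventually_ge_atTop (0:ℝ)] with T hT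
    have : 0 ≤ ∫ t in (0:ℝ)..T, (Q t).re :=
      intervalIntegral.integral_nonneg hT fun t _ => (hQ t).2
    exact mul_nonneg (inv_nonneg.mpr hT) this
  have hc₀re : 0 ≤ c₀.re := ge_of_tendsto hreB hBnn
  have hk : ∀ k, ‖c k‖ ≤ c₀.re := by
    intro k
    classical
    set g : ℝ → ℂ := fun t => Q t * Complex.exp (Complex.I * ((-ν k : ℝ) : ℂ) * t) with hgdef
    set s : Finset (Option (Fin m)) :=
      insert none ((Finset.univ.erase k).image some) with hsdef
    set a' : Option (Fin m) → ℂ := fun o => o.elim c₀ c with ha'def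
    set μ' : Option (Fin m) → ℝ := fun o => o.elim (-ν k) (fun j => ν j - ν k) with hμ'def
    have hμ'ne : ∀ j ∈ s, μ' j ≠ 0 := by
      intro j hj
      cases j with
      | none => exact neg_ne_zero.mpr (hν0 k)
      | some i =>
        simp only [hsdef, Finset.mem_insert, Finset.mem_image, Finset.mem_erase,
          reduceCtorEq, false_or] at hj
        obtain ⟨x, ⟨hx1, _⟩, hx2⟩ := hj
        obtain rfl : x = i := Option.some_injective _ hx2
        exact sub_ne_zero.mpr fun h => hx1 (hνinj h)
    have hpt : ∀ t : ℝ, g t = c k + ∑ x ∈ s, a' x * Complex.exp (Complex.I * μ' x * t) := by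
      intro t
      have hmul : ∀ j : Fin m,
          c j * Complex.exp (Complex.I * ν j * t) * Complex.exp (Complex.I * ((-ν k : ℝ) : ℂ) * t)
            = c j * Complex.exp (Complex.I * ((ν j - ν k : ℝ)) * t) := by
        intro j
        rw [mul_assoc, ← Complex.exp_add]
        congr 2
        push_cast
        ring
      have hsum : ∑ x ∈ s, a' x * Complex.exp (Complex.I * μ' x * t)
          = c₀ * Complex.exp (Complex.I * ((-ν k : ℝ) : ℂ) * t)
            + ∑ j ∈ Finset.univ.erase k,
                c j * Complex.exp (Complex.I * ((ν j - ν k : ℝ)) * t) := by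
        rw [hsdef, Finset.sum_insert (by simp)]
        congr 1
        rw [Finset.sum_image (fun x _ y _ h => Option.some_injective _ h)]
        exact Finset.sum_congr rfl fun j _ => rfl
      have hsplit : ∑ j : Fin m, c j * Complex.exp (Complex.I * ((ν j - ν k : ℝ)) * t)
          = c k * Complex.exp (Complex.I * ((ν k - ν k : ℝ)) * t)
            + ∑ j ∈ Finset.univ.erase k,
                c j * Complex.exp (Complex.I * ((ν j - ν k : ℝ)) * t) :=
        (Finset.add_sum_erase _ _ (Finset.mem_univ k)).symm
      have hone : Complex.exp (Complex.I * ((ν k - ν k : ℝ)) * t) = 1 := by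
        simp
      have expand : g t = c₀ * Complex.exp (Complex.I * ((-ν k : ℝ) : ℂ) * t)
          + ∑ j, c j * Complex.exp (Complex.I * ν j * t)
              * Complex.exp (Complex.I * ((-ν k : ℝ) : ℂ) * t) := by
        show (c₀ + ∑ j, c j * Complex.exp (Complex.I * (ν j) * t))
            * Complex.exp (Complex.I * ((-ν k : ℝ) : ℂ) * t) = _
        rw [add_mul, Finset.sum_mul]
      rw [expand, hsum]
      simp_rw [hmul]
      rw [hsplit, hone, mul_one]
      ring
    have hSk : Tendsto (fun T : ℝ => (T:ℂ)⁻¹ * ∫ t in (0:ℝ)..T, g t)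
        atTop (nhds (c k)) := by
      refine (mean_aux s (c k) a' μ' hμ'ne).congr fun T => ?_
      congr 1
      exact intervalIntegral.integral_congr fun t _ => (hpt t).symm
    have hnorm : ∀ t, ‖g t‖ = (Q t).re := by
      intro t
      show ‖Q t * Complex.exp (Complex.I * ((-ν k : ℝ) : ℂ) * t)‖ = _
      rw [norm_mul, norm_exp_I_mul, mul_one]
      have h := congrArg norm (hreal t)
      rw [h, Complex.norm_real, Real.norm_eq_abs, _root_.abs_of_nonneg (hQ t).2]
    have hbound : ∀ᶠ T : ℝ in atTop,
        ‖(T:ℂ)⁻¹ * ∫ t in (0:ℝ)..T, g t‖ ≤ B T := by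
      filter_upwards [eventually_ge_atTop (0:ℝ)] with T hT
      have hTnorm : ‖(T:ℂ)⁻¹‖ = T⁻¹ := by
        rw [norm_inv, Complex.norm_real, Real.norm_eq_abs, _root_.abs_of_nonneg hT]
      calc ‖(T:ℂ)⁻¹ * ∫ t in (0:ℝ)..T, g t‖
          = ‖(T:ℂ)⁻¹‖ * ‖∫ t in (0:ℝ)..T, g t‖ := norm_mul _ _
        _ ≤ T⁻¹ * ∫ t in (0:ℝ)..T, ‖g t‖ := by
            rw [hTnorm]
            exact mul_le_mul_of_nonneg_left
              (intervalIntegral.norm_integral_le_integral_norm hT) (by positivity)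
        _ = B T := by
            show _ = T⁻¹ * ∫ t in (0:ℝ)..T, (Q t).re
            congr 1
            exact intervalIntegral.integral_congr fun t _ => hnorm t
    have hle : ‖c k‖ ≤ c₀.re := le_of_tendsto_of_tendsto hSk.norm hreB hbound
    exact hle
  refine ⟨him, hc₀re, hk, ?_⟩
  intro h0 j
  have h := hk j
  rw [h0] at h
  simp only [Complex.zero_re] at h
  exact norm_eq_zero.mp (le_antisymm h (norm_nonneg _))
end

section
/- Let a > 0 and 1 < α < 2, and define, for x, y ∈ [−a,a], Φ_α(x,y) = ( cos(πα/2) / ((2a)^{α−1} Γ(α)) ) · ( [a(|x−y| + y − x)]^{α−1} − (a−x)^{α−1} (a+y)^{α−1} ). Then Φ_α(x,y) ≥ 0 for all x, y ∈ [−a,a], and Φ_α(x,y) = 0 whenever x ∈ {−a, a} or y ∈ {−a, a}. -/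
open Real

/-- Formula (11.6) of the paper: the quasi-potential kernel of the completely
asymmetric stable process (`1 < α < 2`, `β = 1`) on `[−a,a]` is nonnegative and
vanishes on the boundary. -/
theorem stmt13 (a α : ℝ) (ha : 0 < a) (hα1 : 1 < α) (hα2 : α < 2)
    (Φ : ℝ → ℝ → ℝ)
    (hΦ : ∀ x y : ℝ, Φ x y =
      (Real.cos (Real.pi * α / 2) / ((2*a) ^ (α - 1) * Real.Gamma α)) *
        ((a * (|x - y| + y - x)) ^ (α - 1)
          - (a - x) ^ (α - 1) * (a + y) ^ (α - 1))) :
    (∀ x ∈ Set.Icc (-a) a, ∀ y ∈ Set.Icc (-a) a, 0 ≤ Φ x y) ∧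
    (∀ x ∈ Set.Icc (-a) a, ∀ y ∈ Set.Icc (-a) a,
      (x = -a ∨ x = a ∨ y = -a ∨ y = a) → Φ x y = 0) := by
  have hα0 : (0:ℝ) < α - 1 := by linarith
  have hαne : α - 1 ≠ 0 := ne_of_gt hα0
  have hcos : Real.cos (Real.pi * α / 2) < 0 := by
    apply Real.cos_neg_of_pi_div_two_lt_of_lt
    · nlinarith [Real.pi_pos]
    · nlinarith [Real.pi_pos]
  have hΓ : 0 < Real.Gamma α := Real.Gamma_pos_of_pos (by linarith)
  have h2a : (0:ℝ) < (2*a) ^ (α - 1) := Real.rpow_pos_of_pos (by linarith) _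
  have hc : Real.cos (Real.pi * α / 2) / ((2*a) ^ (α - 1) * Real.Gamma α) < 0 :=
    div_neg_of_neg_of_pos hcos (mul_pos h2a hΓ)
  constructor
  · rintro x ⟨hx1, hx2⟩ y ⟨hy1, hy2⟩
    rw [hΦ]
    have key : (a * (|x - y| + y - x)) ^ (α - 1)
        ≤ (a - x) ^ (α - 1) * (a + y) ^ (α - 1) := by
      rw [← Real.mul_rpow (by linarith) (by linarith)]
      apply Real.rpow_le_rpow _ _ hα0.le
      · have := le_abs_self (x - y)
        nlinarith
      · rcases abs_cases (x - y) with ⟨h1, h2⟩ | ⟨h1, h2⟩ <;> rw [h1] <;> nlinarith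
    have h := mul_nonneg (neg_nonneg.mpr hc.le) (neg_nonneg.mpr (by linarith :
      (a * (|x - y| + y - x)) ^ (α - 1) - (a - x) ^ (α - 1) * (a + y) ^ (α - 1) ≤ 0))
    rw [neg_mul_neg] at h
    exact h
  · rintro x ⟨hx1, hx2⟩ y ⟨hy1, hy2⟩ (h | h | h | h) <;> rw [hΦ, h]
    · have hfac : (a * (|-a - y| + y - -a)) ^ (α - 1)
          - (a - -a) ^ (α - 1) * (a + y) ^ (α - 1) = 0 := by
        rw [abs_of_nonpos (by linarith), show a * (-(-a - y) + y - -a) = (2*a) * (a + y) by ring,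
          Real.mul_rpow (by linarith) (by linarith), show a - -a = 2*a by ring, sub_self]
      rw [hfac, mul_zero]
    · have hfac : (a * (|a - y| + y - a)) ^ (α - 1)
          - (a - a) ^ (α - 1) * (a + y) ^ (α - 1) = 0 := by
        rw [abs_of_nonneg (by linarith), show a * (a - y + y - a) = 0 by ring,
          Real.zero_rpow hαne, sub_self a, Real.zero_rpow hαne, zero_mul, sub_zero]
      rw [hfac, mul_zero]
    · have hfac : (a * (|x - -a| + -a - x)) ^ (α - 1)
          - (a - x) ^ (α - 1) * (a + -a) ^ (α - 1) = 0 := by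
        rw [abs_of_nonneg (by linarith), show a * (x - -a + -a - x) = 0 by ring,
          Real.zero_rpow hαne, show a + -a = (0:ℝ) by ring, Real.zero_rpow hαne, mul_zero,
          sub_zero]
      rw [hfac, mul_zero]
    · have hfac : (a * (|x - a| + a - x)) ^ (α - 1)
          - (a - x) ^ (α - 1) * (a + a) ^ (α - 1) = 0 := by
        rw [abs_of_nonpos (by linarith), show a * (-(x - a) + a - x) = (2*a) * (a - x) by ring,
          Real.mul_rpow (by linarith) (by linarith), show a + a = 2*a by ring]
        ring
      rw [hfac, mul_zero]
end

section
/- Let a > 0, b > 0 and define S(t) = Σ_{m=0}^{∞} (4/((2m+1)π)) sin( (2m+1)πb/(a+b) ) exp( −(t/2) ((2m+1)π/(a+b))² ) for t > 0. Then S(t) · exp( t π² / (2(a+b)²) ) → (4/π) sin( πa/(a+b) ) as t → ∞; equivalently, S(t) = (4/π) sin( πa/(a+b) ) e^{− t π² / (2(a+b)²)} (1 + o(1)) as t → ∞. -/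
open MeasureTheory Real Filter

/-- Proposition 13.2 of the paper: long-time asymptotics of the series (13.7),
`S(t) = (4/π) sin(πa/(a+b)) e^{−tπ²/(2(a+b)²)} (1+o(1))` as `t → ∞`. -/
theorem stmt18 (a b : ℝ) (ha : 0 < a) (hb : 0 < b)
    (S : ℝ → ℝ)
    (hS : ∀ t : ℝ, S t = ∑' m : ℕ,
      (4 / ((2*(m:ℝ)+1) * Real.pi)) * Real.sin ((2*(m:ℝ)+1) * Real.pi * b / (a+b)) *
        Real.exp (-(t/2) * ((2*(m:ℝ)+1) * Real.pi / (a+b))^2)) :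
    Tendsto (fun t => S t * Real.exp (t * Real.pi^2 / (2*(a+b)^2))) atTop
      (nhds ((4/Real.pi) * Real.sin (Real.pi * a / (a+b)))) := by
  have hab : (0:ℝ) < a + b := by linarith
  have hπ := Real.pi_pos
  set K : ℝ := Real.pi^2 / (2*(a+b)^2) with hK
  have hKpos : 0 < K := by positivity
  set c : ℕ → ℝ := fun m =>
    (4 / ((2*(m:ℝ)+1) * Real.pi)) * Real.sin ((2*(m:ℝ)+1) * Real.pi * b / (a+b)) with hc
  set f : ℝ → ℕ → ℝ := fun t m => c m * Real.exp (-(t * ((4*(m:ℝ)^2 + 4*m) * K))) with hf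
  -- rewrite the function
  have hfeq : ∀ t, S t * Real.exp (t * Real.pi^2 / (2*(a+b)^2)) = ∑' m, f t m := by
    intro t
    rw [hS t, ← tsum_mul_right]
    congr 1; ext m
    simp only [hf, hc]
    rw [mul_assoc, ← Real.exp_add]
    congr 2
    rw [hK]
    field_simp
    ring
  have hcb : ∀ m, |c m| ≤ 4 / Real.pi := by
    intro m
    simp only [hc]
    rw [abs_mul]
    have h1 : |4 / ((2*(m:ℝ)+1) * Real.pi)| ≤ 4 / Real.pi := by
      have hm : (0:ℝ) < 2*(m:ℝ)+1 := by positivity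
      rw [abs_of_pos (by positivity)]
      have : Real.pi ≤ (2*(m:ℝ)+1) * Real.pi := by nlinarith [Nat.cast_nonneg (α := ℝ) m]
      gcongr
    have h2 : |Real.sin ((2*(m:ℝ)+1) * Real.pi * b / (a+b))| ≤ 1 :=
      abs_le.mpr ⟨Real.neg_one_le_sin _, Real.sin_le_one _⟩
    calc |4 / ((2*(m:ℝ)+1) * Real.pi)| * |Real.sin ((2*(m:ℝ)+1) * Real.pi * b / (a+b))|
        ≤ (4 / Real.pi) * 1 := by
          apply mul_le_mul h1 h2 (abs_nonneg _) (by positivity)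
      _ = 4 / Real.pi := mul_one _
  -- the limit function
  set g : ℕ → ℝ := fun m => if m = 0 then c 0 else 0 with hg
  have hgsum : ∑' m, g m = c 0 := tsum_ite_eq 0 (fun _ => c 0)
  have hc0 : c 0 = (4/Real.pi) * Real.sin (Real.pi * a / (a+b)) := by
    simp only [hc, Nat.cast_zero, mul_zero, zero_add, one_mul]
    rw [show Real.pi * b / (a+b) = Real.pi - Real.pi * a / (a+b) by field_simp; ring,
      Real.sin_pi_sub]
  -- dominated convergence
  have key : Tendsto (fun t => ∑' m, f t m) atTop
      (nhds ((4/Real.pi) * Real.sin (Real.pi * a / (a+b)))) := by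
    rw [← hc0, ← hgsum]
    apply tendsto_tsum_of_dominated_convergence
      (bound := fun m : ℕ => (4/Real.pi) * Real.exp (-((4*(m:ℝ)^2 + 4*m) * K)))
    · -- summable bound
      apply Summable.mul_left
      refine Summable.of_nonneg_of_le (fun m => (Real.exp_pos _).le) (fun m => ?_)
        (summable_geometric_of_lt_one (Real.exp_pos _).le
          (Real.exp_lt_one_iff.mpr (by linarith : -(4*K) < 0)))
      rw [← Real.exp_nat_mul]
      apply Real.exp_le_exp.mpr
      have : (0:ℝ) ≤ m := Nat.cast_nonneg m
      nlinarith
    · -- pointwise limits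
      intro m
      rcases Nat.eq_zero_or_pos m with rfl | hm
      · simp only [hf, hg]
        norm_num
      · have hmne : m ≠ 0 := hm.ne'
        simp only [hf, hg, if_neg hmne]
        have hD : 0 < (4*(m:ℝ)^2 + 4*m) * K := by
          have : (1:ℝ) ≤ m := by exact_mod_cast hm
          nlinarith
        have h1 : Tendsto (fun t : ℝ => -(t * ((4*(m:ℝ)^2 + 4*m) * K))) atTop atBot := by
          apply tendsto_neg_atBot_iff.mpr
          exact Tendsto.atTop_mul_const hD tendsto_id
        have h2 := Real.tendsto_exp_atBot.comp h1
        have h3 := Tendsto.const_mul (c m) h2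
        simpa using h3
    · -- bound
      filter_upwards [eventually_ge_atTop (1:ℝ)] with t ht
      intro m
      simp only [hf]
      rw [Real.norm_eq_abs, abs_mul, Real.abs_exp]
      apply mul_le_mul (hcb m) ?_ (Real.exp_pos _).le (by positivity)
      apply Real.exp_le_exp.mpr
      have hD : 0 ≤ (4*(m:ℝ)^2 + 4*m) * K := by positivity
      nlinarith
  exact key.congr (fun t => (hfeq t).symm)
end
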